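/- Every chordal planar 3-connected graph can be obtained from K4 by a finite sequence of operations, each adding a new vertex adjacent to the three vertices of a triangle that bounds a face in a planar embedding; conversely every graph obtained this way is chordal, planar and 3-connected. -/

import Mathlib

open SimpleGraph

/-- A graph is chordal if every cycle of length greater than three contains a chord. -/
def Chordal {V : Type*} (G : SimpleGraph V) : Prop :=
  ∀ (u : V) (c : G.Walk u u), c.IsCycle → 4 ≤ c.length →
    ∃ x y, x ∈ c.support ∧ y ∈ c.support ∧ G.Adj x y ∧ s(x, y) ∉ c.edges

/-- `H` is a minor of `G`: there are pairwise disjoint nonempty connected branch sets in `G`,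
one for each vertex of `H`, with an edge of `G` between the branch sets of any two
vertices adjacent in `H`. -/
def HasGraphMinor {V W : Type*} (G : SimpleGraph V) (H : SimpleGraph W) : Prop :=
  ∃ f : W → Set V,
    (∀ w, (f w).Nonempty) ∧
    (∀ w, (G.induce (f w)).Connected) ∧
    (∀ w₁ w₂, w₁ ≠ w₂ → Disjoint (f w₁) (f w₂)) ∧
    (∀ w₁ w₂, H.Adj w₁ w₂ → ∃ a ∈ f w₁, ∃ b ∈ f w₂, G.Adj a b)

/-- A graph is planar iff (by Kuratowski-Wagner) it has no `K₅` and no `K₃,₃` minor. -/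
def Planar {V : Type*} (G : SimpleGraph V) : Prop :=
  ¬ HasGraphMinor G (⊤ : SimpleGraph (Fin 5)) ∧
  ¬ HasGraphMinor G (completeBipartiteGraph (Fin 3) (Fin 3))

/-- A graph is 3-connected if it has at least 4 vertices and removing any set of at most
2 vertices leaves it connected. -/
def ThreeConnected {V : Type*} [Fintype V] (G : SimpleGraph V) : Prop :=
  4 ≤ Fintype.card V ∧ ∀ s : Set V, s.ncard ≤ 2 → (G.induce sᶜ).Connected

/-- `G` on `Fin n` is a stacked (chordal) triangulation, built in the order of labels:
the first four vertices form a `K₄`, and each later vertex `k` is adjacent among the earlier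
vertices to exactly the three vertices of a triangle which bounds a face of the graph built
so far (equivalently, the graph built so far, including `k`, is planar). -/
def IsStacked {n : ℕ} (G : SimpleGraph (Fin n)) : Prop :=
  4 ≤ n ∧
  (∀ i j : Fin n, i.val < 4 → j.val < 4 → i ≠ j → G.Adj i j) ∧
  ∀ k : Fin n, 4 ≤ k.val →
    ∃ a b c : Fin n, a.val < k.val ∧ b.val < k.val ∧ c.val < k.val ∧
      a ≠ b ∧ a ≠ c ∧ b ≠ c ∧ G.Adj a b ∧ G.Adj a c ∧ G.Adj b c ∧
      (∀ j : Fin n, j.val < k.val → (G.Adj k j ↔ (j = a ∨ j = b ∨ j = c))) ∧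
      Planar (G.induce {j : Fin n | j.val ≤ k.val})
namespace StackedAux

open SimpleGraph Walk

variable {V : Type*} {G : SimpleGraph V}

/-- Reachability via a walk whose support lies in `B`. -/
def ReachIn (G : SimpleGraph V) (B : Set V) (u v : V) : Prop :=
  ∃ p : G.Walk u v, ∀ z ∈ p.support, z ∈ B

lemma ReachIn.mem_left {B : Set V} {u v : V} (h : ReachIn G B u v) : u ∈ B := by
  obtain ⟨p, hp⟩ := h; exact hp _ p.start_mem_support

lemma ReachIn.mem_right {B : Set V} {u v : V} (h : ReachIn G B u v) : v ∈ B := by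
  obtain ⟨p, hp⟩ := h; exact hp _ p.end_mem_support

lemma ReachIn.refl {B : Set V} {u : V} (h : u ∈ B) : ReachIn G B u u :=
  ⟨Walk.nil, by simp [h]⟩

lemma ReachIn.symm {B : Set V} {u v : V} (h : ReachIn G B u v) : ReachIn G B v u := by
  obtain ⟨p, hp⟩ := h
  exact ⟨p.reverse, by simp only [Walk.support_reverse, List.mem_reverse]; exact hp⟩

lemma ReachIn.trans {B : Set V} {u v w : V} (h : ReachIn G B u v) (h' : ReachIn G B v w) :
    ReachIn G B u w := by
  obtain ⟨p, hp⟩ := h; obtain ⟨q, hq⟩ := h'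
  refine ⟨p.append q, fun z hz => ?_⟩
  rw [Walk.mem_support_append_iff] at hz
  exact hz.elim (hp z) (hq z)

lemma ReachIn.cons {B : Set V} {u v w : V} (hu : u ∈ B) (h : G.Adj u v)
    (h' : ReachIn G B v w) : ReachIn G B u w := by
  obtain ⟨p, hp⟩ := h'
  refine ⟨Walk.cons h p, ?_⟩
  simp only [Walk.support_cons, List.mem_cons]
  rintro z (rfl|hz)
  exacts [hu, hp z hz]

lemma ReachIn.mono {B B' : Set V} {u v : V} (hB : B ⊆ B') (h : ReachIn G B u v) :
    ReachIn G B' u v := by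
  obtain ⟨p, hp⟩ := h; exact ⟨p, fun z hz => hB (hp z hz)⟩

lemma ReachIn.map {V' : Type*} {G' : SimpleGraph V'} (f : G →g G') {B : Set V} {u v : V}
    (h : ReachIn G B u v) : ReachIn G' (f '' B) (f u) (f v) := by
  obtain ⟨p, hp⟩ := h
  refine ⟨p.map f, fun z hz => ?_⟩
  rw [Walk.support_map, List.mem_map] at hz
  obtain ⟨z', hz', rfl⟩ := hz
  exact ⟨z', hp z' hz', rfl⟩

/-- A path from a vertex to itself is nil. -/
lemma IsPath.loop_eq_nil {u : V} (p : G.Walk u u) (hp : p.IsPath) : p = Walk.nil := by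
  cases p with
  | nil => rfl
  | cons h q =>
    rw [Walk.cons_isPath_iff] at hp
    exact absurd q.end_mem_support hp.2

/-- If an edge at the start vertex of a path is an edge of the path,
it is the first edge. -/
lemma first_edge_eq {u t z : V} (p : G.Walk u t) (hp : p.IsPath) (he : s(u, z) ∈ p.edges) :
    ∃ (h : G.Adj u z) (r : G.Walk z t), p = Walk.cons h r := by
  cases p with
  | nil => simp at he
  | cons h q =>
    rw [Walk.edges_cons, List.mem_cons] at he
    rcases he with he | he
    · rw [Sym2.eq_iff] at he
      rcases he with ⟨-, rfl⟩ | ⟨h1, rfl⟩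
      · exact ⟨h, q, rfl⟩
      · exact absurd h1 h.ne
    · exact absurd (Walk.fst_mem_support_of_mem_edges q he)
        ((Walk.cons_isPath_iff h q).mp hp).2

/-- A walk with a "chord" can be shortcut: auxiliary version where the chord starts at the
start vertex of the walk. -/
lemma exists_shorter_start [DecidableEq V] {s t y : V} (p : G.Walk s t)
    (hy : y ∈ p.support) (hadj : G.Adj s y) (he : s(s, y) ∉ p.edges) :
    ∃ q : G.Walk s t, (∀ z ∈ q.support, z ∈ p.support) ∧ q.length < p.length := by
  cases p with
  | nil => simp only [Walk.support_nil, List.mem_singleton] at hy; exact absurd hy hadj.ne'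
  | cons h r =>
    rename_i v₂
    have hyv : y ≠ v₂ := by
      rintro rfl; exact he (by simp)
    have hyr : y ∈ r.support := by
      rw [Walk.support_cons, List.mem_cons] at hy
      exact hy.resolve_left (fun h' => hadj.ne' h')
    refine ⟨Walk.cons hadj (r.dropUntil y hyr), fun z hz => ?_, ?_⟩
    · rw [Walk.support_cons, List.mem_cons] at hz
      rcases hz with rfl | hz
      · exact Walk.start_mem_support _
      · rw [Walk.support_cons]
        exact List.mem_cons_of_mem _ (Walk.support_dropUntil_subset r hyr hz)
    · have hsplit : (r.takeUntil y hyr).length + (r.dropUntil y hyr).length = r.length := by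
        rw [← Walk.length_append, Walk.take_spec]
      have htu : 1 ≤ (r.takeUntil y hyr).length := by
        by_contra h'
        push_neg at h'
        exact hyv ((r.takeUntil y hyr).eq_of_length_eq_zero (by omega)).symm
      simp only [Walk.length_cons]
      omega

/-- A walk with a chord can be shortcut. -/
lemma exists_shorter [DecidableEq V] {s t x y : V} (p : G.Walk s t)
    (hx : x ∈ p.support) (hy : y ∈ p.support) (hadj : G.Adj x y) (he : s(x, y) ∉ p.edges) :
    ∃ q : G.Walk s t, (∀ z ∈ q.support, z ∈ p.support) ∧ q.length < p.length := by
  induction p with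
  | nil =>
    simp only [Walk.support_nil, List.mem_singleton] at hx hy
    exact absurd (hx.trans hy.symm) hadj.ne
  | cons h r ih =>
    rename_i a b w
    by_cases hxs : x = a
    · subst hxs
      exact exists_shorter_start _ hy hadj he
    by_cases hys : y = a
    · subst hys
      obtain ⟨q, hq1, hq2⟩ := exists_shorter_start (Walk.cons h r) hx hadj.symm
        (by rwa [Sym2.eq_swap] at he)
      exact ⟨q, hq1, hq2⟩
    have hxr : x ∈ r.support := by
      rw [Walk.support_cons, List.mem_cons] at hx; exact hx.resolve_left hxs
    have hyr : y ∈ r.support := by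
      rw [Walk.support_cons, List.mem_cons] at hy; exact hy.resolve_left hys
    have her : s(x, y) ∉ r.edges := fun h' => he (by rw [Walk.edges_cons]; exact List.mem_cons_of_mem _ h')
    obtain ⟨q, hq1, hq2⟩ := ih hxr hyr her
    refine ⟨Walk.cons h q, fun z hz => ?_, by simpa using hq2⟩
    rw [Walk.support_cons, List.mem_cons] at hz
    rcases hz with rfl | hz
    · exact Walk.start_mem_support _
    · rw [Walk.support_cons]
      exact List.mem_cons_of_mem _ (hq1 z hz)

end StackedAux
namespace StackedAux

open SimpleGraph Walk

variable {V : Type*} {G : SimpleGraph V}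

/-- Gluing two internally disjoint paths of length ≥ 2 yields a cycle. -/
lemma append_reverse_isCycle {s t : V} (p q : G.Walk s t) (hp : p.IsPath) (hq : q.IsPath)
    (hl2p : 2 ≤ p.length) (hl2q : 2 ≤ q.length)
    (hint : ∀ z, z ∈ p.support → z ∈ q.support → z = s ∨ z = t) :
    (p.append q.reverse).IsCycle := by
  rw [Walk.isCycle_def]
  refine ⟨?_, ?_, ?_⟩
  · -- trail
    rw [Walk.isTrail_def, Walk.edges_append, Walk.edges_reverse, List.nodup_append]
    refine ⟨hp.isTrail.edges_nodup, List.nodup_reverse.mpr hq.isTrail.edges_nodup, ?_⟩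
    intro e hep e' heq hee
    subst hee
    rw [List.mem_reverse] at heq
    -- common edge must be s(s,t)
    induction e with
    | h z₁ z₂ =>
      have hne : z₁ ≠ z₂ := (G.ne_of_adj (p.edges_subset_edgeSet hep))
      have h₁ : z₁ = s ∨ z₁ = t :=
        hint z₁ (Walk.fst_mem_support_of_mem_edges p hep)
          (Walk.fst_mem_support_of_mem_edges q heq)
      have h₂ : z₂ = s ∨ z₂ = t :=
        hint z₂ (Walk.snd_mem_support_of_mem_edges p hep)
          (Walk.snd_mem_support_of_mem_edges q heq)
      have hst : s(z₁, z₂) = s(s, t) := by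
        rcases h₁ with rfl | rfl <;> rcases h₂ with rfl | rfl
        · exact absurd rfl hne
        · rfl
        · exact Sym2.eq_swap
        · exact absurd rfl hne
      rw [hst] at hep
      obtain ⟨h', r, rfl⟩ := first_edge_eq p hp hep
      have := IsPath.loop_eq_nil r ((Walk.cons_isPath_iff h' r).mp hp).1
      subst this
      simp at hl2p
  · -- not nil
    intro h
    have : (p.append q.reverse).length = 0 := by rw [h]; rfl
    rw [Walk.length_append, Walk.length_reverse] at this
    omega
  · -- support tail nodup
    rw [Walk.support_append]
    have hps : p.support = s :: p.support.tail := p.support_eq_cons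
    rw [hps, List.cons_append, List.tail_cons]
    rw [List.nodup_append]
    have hpn : p.support.Nodup := hp.support_nodup
    have hqrn : q.reverse.support.Nodup := hq.reverse.support_nodup
    refine ⟨(hps ▸ hpn : (s :: p.support.tail).Nodup).of_cons, hqrn.tail, ?_⟩
    intro z hz1 z' hz2 hzz
    subst hzz
    have hz1' : z ∈ p.support := by rw [hps]; exact List.mem_cons_of_mem _ hz1
    have hz2' : z ∈ q.support := by
      have : z ∈ q.reverse.support := List.mem_of_mem_tail hz2
      rwa [Walk.support_reverse, List.mem_reverse] at this
    rcases hint z hz1' hz2' with rfl | rfl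
    · -- z = s, but s not in p.support.tail
      have := hps ▸ hpn
      rw [List.nodup_cons] at this
      exact this.1 hz1
    · -- z = t, but t not in q.reverse.support.tail
      have hqr := q.reverse.support_eq_cons
      rw [hqr, List.nodup_cons] at hqrn
      exact hqrn.1 hz2

/-- Walk surgery: if the neighborhood of `ℓ` is a clique, reachability avoiding it persists. -/
lemma reachIn_avoid [DecidableEq V] {B : Set V} {ℓ : V}
    (htri : ∀ u w, G.Adj ℓ u → G.Adj ℓ w → u ≠ w → G.Adj u w) {x y : V}
    (hx : x ≠ ℓ) (hy : y ≠ ℓ) (h : ReachIn G B x y) : ReachIn G (B \ {ℓ}) x y := by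
  obtain ⟨p₀, hp₀⟩ := h
  have hP : ∀ z ∈ p₀.bypass.support, z ∈ B := fun z hz => hp₀ z (p₀.support_bypass_subset hz)
  set P := p₀.bypass with hPdef
  have hPpath : P.IsPath := p₀.bypass_isPath
  by_cases hℓ : ℓ ∈ P.support
  · -- split at ℓ
    have hW1 : (P.takeUntil ℓ hℓ).IsPath := hPpath.takeUntil hℓ
    have hW2 : (P.dropUntil ℓ hℓ).IsPath := hPpath.dropUntil hℓ
    have hW1r : (P.takeUntil ℓ hℓ).reverse.IsPath := hW1.reverse
    have hxl : ℓ ≠ x := fun h' => hx h'.symm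
    obtain ⟨u, hadj1, q1, hdec1⟩ :=
      Walk.not_nil_iff.mp (Walk.not_nil_of_ne (p := (P.takeUntil ℓ hℓ).reverse) hxl)
    obtain ⟨w, hadj2, q2, hdec2⟩ :=
      Walk.not_nil_iff.mp (Walk.not_nil_of_ne (p := P.dropUntil ℓ hℓ) hy.symm)
    rw [hdec1] at hW1r
    rw [Walk.cons_isPath_iff] at hW1r
    have hW2' := hW2
    rw [hdec2, Walk.cons_isPath_iff] at hW2'
    -- supports of q1 and q2 lie in B and avoid ℓ
    have hq1sub : ∀ z ∈ q1.support, z ∈ B \ {ℓ} := by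
      intro z hz
      have h1 : z ∈ (P.takeUntil ℓ hℓ).reverse.support := by
        rw [hdec1, Walk.support_cons]; exact List.mem_cons_of_mem _ hz
      rw [Walk.support_reverse, List.mem_reverse] at h1
      exact ⟨hP z (Walk.support_takeUntil_subset _ hℓ h1), fun h' => hW1r.2 (h' ▸ hz)⟩
    have hq2sub : ∀ z ∈ q2.support, z ∈ B \ {ℓ} := by
      intro z hz
      have h1 : z ∈ (P.dropUntil ℓ hℓ).support := by
        rw [hdec2, Walk.support_cons]; exact List.mem_cons_of_mem _ hz
      exact ⟨hP z (Walk.support_dropUntil_subset _ hℓ h1), fun h' => hW2'.2 (h' ▸ hz)⟩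
    by_cases huw : u = w
    · subst huw
      refine ⟨q1.reverse.append q2, fun z hz => ?_⟩
      rw [Walk.mem_support_append_iff] at hz
      rcases hz with hz | hz
      · exact hq1sub z (by rwa [Walk.support_reverse, List.mem_reverse] at hz)
      · exact hq2sub z hz
    · refine ⟨q1.reverse.append (Walk.cons (htri u w hadj1 hadj2 huw) q2), fun z hz => ?_⟩
      rw [Walk.mem_support_append_iff] at hz
      rcases hz with hz | hz
      · exact hq1sub z (by rwa [Walk.support_reverse, List.mem_reverse] at hz)
      · rw [Walk.support_cons, List.mem_cons] at hz
        rcases hz with rfl | hz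
        · exact hq1sub z q1.start_mem_support
        · exact hq2sub z hz
  · exact ⟨P, fun z hz => ⟨hP z hz, fun h' => hℓ (h' ▸ hz)⟩⟩

end StackedAux
namespace StackedAux

open SimpleGraph Walk

variable {V : Type*} {G : SimpleGraph V}

lemma reachable_induce_of_reachIn {B : Set V} :
    ∀ {x y : V} (p : G.Walk x y), (∀ z ∈ p.support, z ∈ B) →
      ∀ (hx : x ∈ B) (hy : y ∈ B), (G.induce B).Reachable ⟨x, hx⟩ ⟨y, hy⟩ := by
  intro x y p
  induction p with
  | nil => intro _ hx hy; exact Reachable.refl _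
  | cons h q ih =>
    intro hp hx hy
    rename_i a b c
    have hb : b ∈ B := hp b (by rw [Walk.support_cons]; exact List.mem_cons_of_mem _ q.start_mem_support)
    have hadj : (G.induce B).Adj ⟨a, hx⟩ ⟨b, hb⟩ := by simpa using h
    exact (hadj.reachable).trans (ih (fun z hz => hp z (by rw [Walk.support_cons]; exact List.mem_cons_of_mem _ hz)) hb hy)

lemma induce_connected_iff {B : Set V} :
    (G.induce B).Connected ↔ B.Nonempty ∧ ∀ x ∈ B, ∀ y ∈ B, ReachIn G B x y := by
  constructor
  · intro h
    have hne : B.Nonempty := by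
      obtain ⟨⟨b, hb⟩⟩ := h.nonempty
      exact ⟨b, hb⟩
    refine ⟨hne, fun x hx y hy => ?_⟩
    obtain ⟨p⟩ := h.preconnected ⟨x, hx⟩ ⟨y, hy⟩
    let f : G.induce B →g G := ⟨Subtype.val, fun hadj => by simpa using hadj⟩
    refine ⟨p.map f, fun z hz => ?_⟩
    rw [Walk.support_map, List.mem_map] at hz
    obtain ⟨z', _, rfl⟩ := hz
    exact z'.2
  · rintro ⟨⟨b, hb⟩, h⟩
    haveI : Nonempty ↑B := ⟨⟨b, hb⟩⟩
    refine ⟨fun x y => ?_⟩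
    obtain ⟨p, hp⟩ := h x.1 x.2 y.1 y.2
    have := reachable_induce_of_reachIn p hp x.2 y.2
    simpa using this

lemma hasGraphMinor_mono {V' W : Type*} {G' : SimpleGraph V'} {K : SimpleGraph W}
    (f : V → V') (hinj : Function.Injective f)
    (hhom : ∀ a b, G.Adj a b → G'.Adj (f a) (f b)) :
    HasGraphMinor G K → HasGraphMinor G' K := by
  rintro ⟨b, h1, h2, h3, h4⟩
  let F : G →g G' := ⟨f, fun h => hhom _ _ h⟩
  refine ⟨fun w => f '' b w, fun w => (h1 w).image f, fun w => ?_, fun w₁ w₂ hw => ?_,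
    fun w₁ w₂ hadj => ?_⟩
  · show (G'.induce (f '' b w)).Connected
    obtain ⟨hne, hr⟩ := induce_connected_iff.mp (h2 w)
    refine induce_connected_iff.mpr ⟨hne.image f, ?_⟩
    rintro x ⟨x₀, hx₀, rfl⟩ y ⟨y₀, hy₀, rfl⟩
    have hre := (hr x₀ hx₀ y₀ hy₀).map F
    have hFc : ⇑F = f := rfl
    rw [hFc] at hre
    exact hre
  · exact (Set.disjoint_image_iff hinj).mpr (h3 w₁ w₂ hw)
  · obtain ⟨a, ha, c, hc, hac⟩ := h4 w₁ w₂ hadj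
    exact ⟨f a, ⟨a, ha, rfl⟩, f c, ⟨c, hc, rfl⟩, hhom _ _ hac⟩

lemma minor_card_le {W : Type*} [Fintype V] [Fintype W] {K : SimpleGraph W}
    (h : HasGraphMinor G K) : Fintype.card W ≤ Fintype.card V := by
  obtain ⟨b, h1, _, h3, _⟩ := h
  have hinj : Function.Injective (fun w => (h1 w).some) := by
    intro w₁ w₂ he
    by_contra hne
    have h2b := (h1 w₂).some_mem
    simp only at he
    rw [← he] at h2b
    exact Set.disjoint_left.mp (h3 w₁ w₂ hne) (h1 w₁).some_mem h2b
  exact Fintype.card_le_of_injective _ hinj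

lemma planar_of_card_lt_five [Fintype V] (h : Fintype.card V < 5) : Planar G := by
  constructor
  · intro hm
    have := minor_card_le hm
    simp only [Fintype.card_fin] at this
    omega
  · intro hm
    have := minor_card_le hm
    simp only [Fintype.card_sum, Fintype.card_fin] at this
    omega

lemma planar_mono {V' : Type*} {G' : SimpleGraph V'} (f : V → V')
    (hinj : Function.Injective f) (hhom : ∀ a b, G.Adj a b → G'.Adj (f a) (f b)) :
    Planar G' → Planar G := by
  rintro ⟨h5, h33⟩
  exact ⟨fun m => h5 (hasGraphMinor_mono f hinj hhom m),
    fun m => h33 (hasGraphMinor_mono f hinj hhom m)⟩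

lemma planar_iff_of_iso {V' : Type*} {G' : SimpleGraph V'} (e : G ≃g G') :
    Planar G ↔ Planar G' := by
  constructor
  · exact planar_mono e.symm e.symm.toEquiv.injective
      (fun a b h => by rwa [← e.symm.map_rel_iff] at h)
  · exact planar_mono e e.toEquiv.injective
      (fun a b h => by rwa [← e.map_rel_iff] at h)

lemma chordal_of_iso {V' : Type*} {G' : SimpleGraph V'} (e : G ≃g G') (h : Chordal G) :
    Chordal G' := by
  intro u c hc hl
  have hcyc : (c.map e.symm.toHom).IsCycle := hc.map e.symm.toEquiv.injective
  have hlen : 4 ≤ (c.map e.symm.toHom).length := by rwa [Walk.length_map]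
  obtain ⟨x, y, hx, hy, hadj, hne⟩ := h _ _ hcyc hlen
  rw [Walk.support_map, List.mem_map] at hx hy
  obtain ⟨x₀, hx₀, rfl⟩ := hx
  obtain ⟨y₀, hy₀, rfl⟩ := hy
  refine ⟨x₀, y₀, hx₀, hy₀, ?_, fun he => hne ?_⟩
  · rwa [← e.symm.map_rel_iff]
  · rw [Walk.edges_map]
    exact List.mem_map_of_mem he

lemma threeConnected_of_iso {V' : Type*} {G' : SimpleGraph V'} [Fintype V] [Fintype V']
    (e : G ≃g G') (h : ThreeConnected G) : ThreeConnected G' := by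
  obtain ⟨hcard, hconn⟩ := h
  refine ⟨le_trans hcard (le_of_eq (Fintype.card_congr e.toEquiv)), fun s hs => ?_⟩
  have hinj : Function.Injective (⇑e.symm) := fun a b hab => e.symm.toEquiv.injective hab
  have hsym : (⇑e.symm '' s).ncard ≤ 2 := by
    have hcc : (⇑e.symm '' s).ncard = s.ncard := Set.ncard_image_of_injective s hinj
    omega
  have hc := hconn (⇑e.symm '' s) hsym
  rw [induce_connected_iff] at hc ⊢
  obtain ⟨⟨b, hb⟩, hr⟩ := hc
  have hmem : ∀ z : V, z ∈ (⇑e.symm '' s)ᶜ ↔ (e z : V') ∈ sᶜ := by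
    intro z
    simp only [Set.mem_compl_iff, Set.mem_image, not_exists, not_and]
    constructor
    · intro hz hez
      exact hz (e z) hez (by simp)
    · rintro hz w hw rfl
      exact hz (by simpa using hw)
  refine ⟨⟨e b, (hmem b).mp hb⟩, fun x hx y hy => ?_⟩
  have hx' : (e.symm x : V) ∈ (⇑e.symm '' s)ᶜ := by
    rw [hmem]; simpa using hx
  have hy' : (e.symm y : V) ∈ (⇑e.symm '' s)ᶜ := by
    rw [hmem]; simpa using hy
  have hre := (hr _ hx' _ hy').map e.toHom
  have hch : ⇑e.toHom = ⇑e := rfl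
  rw [hch] at hre
  have himg : ⇑e '' (⇑e.symm '' s)ᶜ = sᶜ := by
    ext z
    constructor
    · rintro ⟨w, hw, rfl⟩; exact (hmem w).mp hw
    · intro hz
      exact ⟨e.symm z, by rw [hmem]; simpa using hz, by simp⟩
  rw [himg] at hre
  simpa using hre

end StackedAux
namespace StackedAux

open SimpleGraph Walk

variable {V : Type*} {G : SimpleGraph V}

lemma length_rotate [DecidableEq V] {u v : V} (c : G.Walk v v) (h : u ∈ c.support) :
    (c.rotate u h).length = c.length := by
  unfold Walk.rotate
  rw [Walk.length_append, Nat.add_comm, ← Walk.length_append, Walk.take_spec]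

lemma ncard_triple {α : Type*} {a b c : α} (hab : a ≠ b) (hac : a ≠ c) (hbc : b ≠ c) :
    ({a, b, c} : Set α).ncard = 3 := by
  rw [Set.ncard_insert_of_notMem (by simp [hab, hac])
      ((Set.finite_singleton c).insert b),
    Set.ncard_insert_of_notMem (by simp [hbc]) (Set.finite_singleton c),
    Set.ncard_singleton]

lemma exists_not_mem_of_ncard_le_two {α : Type*} {s : Set α} (hfin : s.Finite)
    (hs : s.ncard ≤ 2) {a b c : α} (hab : a ≠ b) (hac : a ≠ c) (hbc : b ≠ c) :
    a ∉ s ∨ b ∉ s ∨ c ∉ s := by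
  by_contra h'
  push_neg at h'
  obtain ⟨ha, hb, hc⟩ := h'
  have hsub : ({a, b, c} : Set α) ⊆ s := by
    intro z hz
    rcases hz with rfl | rfl | rfl
    exacts [ha, hb, hc]
  have := Set.ncard_le_ncard hsub hfin
  rw [ncard_triple hab hac hbc] at this
  omega

variable {n : ℕ}

lemma stacked_chordal {G : SimpleGraph (Fin n)} (hG : IsStacked G) : Chordal G := by
  classical
  intro u c hc hl
  -- maximal vertex of the cycle
  have humem : u ∈ c.support.toFinset := List.mem_toFinset.mpr c.start_mem_support
  set F := c.support.toFinset with hF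
  have hFne : F.Nonempty := ⟨u, humem⟩
  set v := F.max' hFne with hv
  have hvmem : v ∈ c.support := List.mem_toFinset.mp (F.max'_mem hFne)
  have hvmax : ∀ z ∈ c.support, z ≤ v := fun z hz => F.le_max' z (List.mem_toFinset.mpr hz)
  set c' := c.rotate v hvmem with hc'def
  have hc' : c'.IsCycle := hc.rotate hvmem
  have hlen' : c'.length = c.length := length_rotate c hvmem
  have hsup : ∀ z, z ∈ c'.support → z ∈ c.support := by
    intro z hz
    rw [c'.support_eq_cons, List.mem_cons] at hz
    rcases hz with rfl | hz
    · exact hvmem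
    · have : z ∈ c.support.tail := (c.support_rotate v hvmem).mem_iff.mp hz
      exact List.mem_of_mem_tail this
  have hedg : ∀ e, e ∈ c'.edges ↔ e ∈ c.edges :=
    fun e => (c.rotate_edges v hvmem).mem_iff
  -- decompose the cycle
  obtain ⟨x, hvx, p, hdec⟩ := Walk.not_nil_iff.mp
    (fun hN => hc'.ne_nil hN.eq_nil)
  have hcp : p.IsPath ∧ s(v, x) ∉ p.edges := by
    rw [hdec, Walk.cons_isCycle_iff] at hc'
    exact hc'
  have hplen : p.length + 1 = c.length := by
    rw [← hlen', hdec, Walk.length_cons]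
  -- second decomposition from the far end
  have hpr : p.reverse.IsPath := hcp.1.reverse
  obtain ⟨y, hvy, q, hdecr⟩ := Walk.not_nil_iff.mp
    (Walk.not_nil_of_ne (p := p.reverse) (fun h' => hvx.ne' h'.symm))
  have hq : q.IsPath ∧ v ∉ q.support := by
    rw [hdecr, Walk.cons_isPath_iff] at hpr
    exact hpr
  have hqlen : q.length + 1 = p.length := by
    have := congrArg Walk.length hdecr
    rw [Walk.length_reverse, Walk.length_cons] at this
    omega
  have hxsup : x ∈ c'.support := by
    rw [hdec, Walk.support_cons]
    exact List.mem_cons_of_mem _ p.start_mem_support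
  have hysupp : y ∈ p.support := by
    have : y ∈ p.reverse.support := by
      rw [hdecr, Walk.support_cons]
      exact List.mem_cons_of_mem _ q.start_mem_support
    rwa [Walk.support_reverse, List.mem_reverse] at this
  have hysup : y ∈ c'.support := by
    rw [hdec, Walk.support_cons]
    exact List.mem_cons_of_mem _ hysupp
  have hxv : x ≠ v := hvx.ne'
  have hyv : y ≠ v := hvy.ne'
  have hq2 : 2 ≤ q.length := by omega
  have hxy : x ≠ y := by
    rintro rfl
    have := IsPath.loop_eq_nil q hq.1
    rw [this] at hqlen
    simp at hqlen
    omega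
  by_cases hv4 : 4 ≤ v.val
  · -- big case : x y are among the triangle of v
    obtain ⟨a, b, cc, hav, hbv, hcv, hab, hac, hbc, hAB, hAC, hBC, hexact, -⟩ := hG.2.2 v hv4
    have hxval : x.val < v.val := by
      have := hvmax x (hsup x hxsup)
      exact Fin.lt_def.mp (lt_of_le_of_ne this hxv)
    have hyval : y.val < v.val := by
      have := hvmax y (hsup y hysup)
      exact Fin.lt_def.mp (lt_of_le_of_ne this hyv)
    have hxm : x = a ∨ x = b ∨ x = cc := (hexact x hxval).mp hvx
    have hym : y = a ∨ y = b ∨ y = cc := (hexact y hyval).mp hvy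
    have hadjxy : G.Adj x y := by
      rcases hxm with rfl | rfl | rfl <;> rcases hym with rfl | rfl | rfl <;>
        first
          | exact absurd rfl hxy
          | assumption
          | exact hAB.symm
          | exact hAC.symm
          | exact hBC.symm
    refine ⟨x, y, hsup x hxsup, hsup y hysup, hadjxy, fun he => ?_⟩
    rw [← hedg] at he
    rw [hdec, Walk.edges_cons, List.mem_cons] at he
    rcases he with he | he
    · rw [Sym2.eq_iff] at he
      rcases he with ⟨rfl, -⟩ | ⟨-, h2⟩
      · exact hxv rfl
      · exact hyv h2
    · -- chord inside p
      have he' : s(x, y) ∈ p.reverse.edges := by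
        rwa [Walk.edges_reverse, List.mem_reverse]
      rw [hdecr, Walk.edges_cons, List.mem_cons] at he'
      rcases he' with he' | he'
      · rw [Sym2.eq_iff] at he'
        rcases he' with ⟨h1, -⟩ | ⟨-, h2⟩
        · exact hxv h1
        · exact hyv h2
      · -- edge of q joining its two endpoints
        rw [Sym2.eq_swap] at he'
        obtain ⟨h', r, hr⟩ := first_edge_eq q hq.1 he'
        have : r.IsPath := by
          rw [hr, Walk.cons_isPath_iff] at hq
          exact hq.1.1
        have hrnil := IsPath.loop_eq_nil r this
        have := congrArg Walk.length hr
        rw [Walk.length_cons, hrnil, Walk.length_nil] at this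
        omega
  · -- small case : every vertex of the cycle is < 4 ; length must be 4
    push_neg at hv4
    have hlow : ∀ z ∈ c'.support, z.val < 4 := by
      intro z hz
      have := hvmax z (hsup z hz)
      have := Fin.le_def.mp this
      omega
    have hlen4 : c.length = 4 := by
      have hnd : c'.support.tail.Nodup := hc'.support_nodup
      have hmap : (c'.support.tail.map Fin.val).Nodup :=
        hnd.map (Fin.val_injective)
      have hsub : (c'.support.tail.map Fin.val).toFinset ⊆ Finset.range 4 := by
        intro z hz
        rw [List.mem_toFinset, List.mem_map] at hz
        obtain ⟨z', hz', rfl⟩ := hz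
        rw [Finset.mem_range]
        exact hlow z' (List.mem_of_mem_tail hz')
      have hcard := Finset.card_le_card hsub
      rw [List.toFinset_card_of_nodup hmap, Finset.card_range, List.length_map] at hcard
      have : c'.support.tail.length = c'.length := by
        have := c'.length_support
        have ht : c'.support.tail.length + 1 = c'.support.length := by
          rw [c'.support_eq_cons]; simp
        omega
      omega
    -- middle vertex m of q
    obtain ⟨m, hym, r, hdecq⟩ := Walk.not_nil_iff.mp
      (Walk.not_nil_iff_lt_length.mpr (by omega : 0 < q.length))
    have hrpath : r.IsPath ∧ y ∉ r.support := by
      have := hq.1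
      rw [hdecq, Walk.cons_isPath_iff] at this
      exact this
    have hmv : m ≠ v := by
      intro h'
      apply hq.2
      rw [← h', hdecq, Walk.support_cons]
      exact List.mem_cons_of_mem _ r.start_mem_support
    have hmsupq : m ∈ q.support := by
      rw [hdecq, Walk.support_cons]
      exact List.mem_cons_of_mem _ r.start_mem_support
    have hmsupp : m ∈ p.support := by
      have : m ∈ p.reverse.support := by
        rw [hdecr, Walk.support_cons]
        exact List.mem_cons_of_mem _ hmsupq
      rwa [Walk.support_reverse, List.mem_reverse] at this
    have hmsup : m ∈ c'.support := by
      rw [hdec, Walk.support_cons]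
      exact List.mem_cons_of_mem _ hmsupp
    have hadjvm : G.Adj v m :=
      hG.2.1 v m (by omega) (hlow m hmsup) (fun h' => hmv h'.symm)
    have hrlen : r.length = 1 := by
      have := congrArg Walk.length hdecq
      rw [Walk.length_cons] at this
      omega
    refine ⟨v, m, hsup v (by rw [hdec]; exact Walk.start_mem_support _),
      hsup m hmsup, hadjvm, fun he => ?_⟩
    rw [← hedg] at he
    rw [hdec, Walk.edges_cons, List.mem_cons] at he
    rcases he with he | he
    · rw [Sym2.eq_iff] at he
      rcases he with ⟨-, h2⟩ | ⟨h1, -⟩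
      · -- m = x : r is a loop of length 1
        subst h2
        have hrnil := IsPath.loop_eq_nil r hrpath.1
        rw [hrnil] at hrlen
        simp at hrlen
      · exact hxv h1.symm
    · have he' : s(v, m) ∈ p.reverse.edges := by
        rwa [Walk.edges_reverse, List.mem_reverse]
      rw [hdecr, Walk.edges_cons, List.mem_cons] at he'
      rcases he' with he' | he'
      · rw [Sym2.eq_iff] at he'
        rcases he' with ⟨-, h2⟩ | ⟨h1, -⟩
        · exact (hym.ne' h2).elim
        · exact (hyv h1.symm).elim
      · rw [hdecq, Walk.edges_cons, List.mem_cons] at he'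
        rcases he' with he' | he'
        · rw [Sym2.eq_iff] at he'
          rcases he' with ⟨h1, -⟩ | ⟨h1, h2⟩
          · exact (hyv h1.symm).elim
          · exact (hmv h1.symm).elim
        · have : v ∈ r.support := Walk.fst_mem_support_of_mem_edges r he'
          apply hq.2
          rw [hdecq, Walk.support_cons]
          exact List.mem_cons_of_mem _ this
  
end StackedAux
namespace StackedAux

open SimpleGraph Walk

variable {n : ℕ}

lemma stacked_planar {G : SimpleGraph (Fin n)} (hG : IsStacked G) : Planar G := by
  by_cases h5 : 5 ≤ n
  · have hk : (4 : ℕ) ≤ n - 1 := by omega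
    set k : Fin n := ⟨n - 1, by omega⟩ with hkdef
    obtain ⟨a, b, c, -, -, -, -, -, -, -, -, -, -, hplanar⟩ := hG.2.2 k hk
    have hset : {j : Fin n | j.val ≤ k.val} = Set.univ := by
      ext j
      simp only [Set.mem_setOf_eq, Set.mem_univ, iff_true]
      have := j.isLt
      show j.val ≤ n - 1
      omega
    rw [hset] at hplanar
    exact (planar_iff_of_iso (induceUnivIso G)).mp hplanar
  · exact planar_of_card_lt_five (by simp; omega)

lemma stacked_threeConnected {G : SimpleGraph (Fin n)} (hG : IsStacked G) :
    ThreeConnected G := by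
  classical
  have h4 := hG.1
  refine ⟨by simpa using h4, fun s hs => ?_⟩
  have hfin : s.Finite := Set.toFinite s
  -- three low vertices
  set e0 : Fin n := ⟨0, by omega⟩
  set e1 : Fin n := ⟨1, by omega⟩
  set e2 : Fin n := ⟨2, by omega⟩
  have h01 : e0 ≠ e1 := by simp [e0, e1, Fin.ext_iff]
  have h02 : e0 ≠ e2 := by simp [e0, e2, Fin.ext_iff]
  have h12 : e1 ≠ e2 := by simp [e1, e2, Fin.ext_iff]
  have hw₀ : ∃ w : Fin n, w.val < 4 ∧ w ∈ sᶜ := by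
    rcases exists_not_mem_of_ncard_le_two hfin hs h01 h02 h12 with h | h | h
    · exact ⟨e0, by simp [e0], h⟩
    · exact ⟨e1, by simp [e1], h⟩
    · exact ⟨e2, by simp [e2], h⟩
  obtain ⟨w₀, hw₀4, hw₀s⟩ := hw₀
  rw [induce_connected_iff]
  refine ⟨⟨w₀, hw₀s⟩, ?_⟩
  have key : ∀ N : ℕ, ∀ x : Fin n, x.val < N → x ∈ sᶜ → ReachIn G sᶜ x w₀ := by
    intro N
    induction N with
    | zero => intro x hx; omega
    | succ N ih =>
      intro x hxN hxs
      by_cases hx4 : x.val < 4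
      · by_cases hxw : x = w₀
        · subst hxw; exact ReachIn.refl hxs
        · exact ReachIn.cons hxs (hG.2.1 x w₀ hx4 hw₀4 hxw) (ReachIn.refl hw₀s)
      · push_neg at hx4
        obtain ⟨a, b, c, hav, hbv, hcv, hab, hac, hbc, -, -, -, hexact, -⟩ :=
          hG.2.2 x hx4
        have hd : a ∉ s ∨ b ∉ s ∨ c ∉ s :=
          exists_not_mem_of_ncard_le_two hfin hs hab hac hbc
        have step : ∀ d : Fin n, d.val < x.val → d ∉ s → (d = a ∨ d = b ∨ d = c) →
            ReachIn G sᶜ x w₀ := by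
          intro d hdval hds hdm
          exact ReachIn.cons hxs ((hexact d hdval).mpr hdm) (ih d (by omega) hds)
        rcases hd with h | h | h
        · exact step a hav h (Or.inl rfl)
        · exact step b hbv h (Or.inr (Or.inl rfl))
        · exact step c hcv h (Or.inr (Or.inr rfl))
  intro x hx y hy
  exact (key n x x.isLt hx).trans (key n y y.isLt hy).symm

lemma stacked_props {G G' : SimpleGraph (Fin n)} (hG' : IsStacked G') (e : G ≃g G') :
    Chordal G ∧ Planar G ∧ ThreeConnected G :=
  ⟨chordal_of_iso e.symm (stacked_chordal hG'),
   (planar_iff_of_iso e).mpr (stacked_planar hG'),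
   threeConnected_of_iso e.symm (stacked_threeConnected hG')⟩

end StackedAux
namespace StackedAux

open SimpleGraph Walk

variable {V : Type*} {G : SimpleGraph V}

/-- Chordality restricted to cycles inside a vertex set. -/
def ChordalOn (G : SimpleGraph V) (A : Set V) : Prop :=
  ∀ (u : V) (c : G.Walk u u), c.IsCycle → (∀ z ∈ c.support, z ∈ A) → 4 ≤ c.length →
    ∃ x y, x ∈ c.support ∧ y ∈ c.support ∧ G.Adj x y ∧ s(x, y) ∉ c.edges

/-- Simplicial vertex relative to a vertex set. -/
def SimpOn (G : SimpleGraph V) (A : Set V) (v : V) : Prop :=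
  v ∈ A ∧ ∀ x ∈ A, ∀ y ∈ A, G.Adj v x → G.Adj v y → x ≠ y → G.Adj x y

lemma Chordal.chordalOn (h : Chordal G) (A : Set V) : ChordalOn G A :=
  fun u c hc _ hl => h u c hc hl

lemma ChordalOn.mono {A B : Set V} (hBA : B ⊆ A) (h : ChordalOn G A) : ChordalOn G B :=
  fun u c hc hsup hl => h u c hc (fun z hz => hBA (hsup z hz)) hl

lemma adj_of_length_one {u v : V} (p : G.Walk u v) (h : p.length = 1) : G.Adj u v := by
  cases p with
  | nil => simp at h
  | cons h' q =>
    rw [Walk.length_cons] at h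
    have := q.eq_of_length_eq_zero (by omega)
    rwa [← this]

lemma reachIn_of_mem_reachSet [DecidableEq V] {B : Set V} {a x : V}
    (h : ReachIn G B a x) : ReachIn G {z | z ∈ B ∧ ReachIn G B a z} a x := by
  obtain ⟨p, hp⟩ := h
  refine ⟨p, fun z hz => ⟨hp z hz, ⟨p.takeUntil z hz, fun w hw =>
    hp w (p.support_takeUntil_subset hz hw)⟩⟩⟩

/-- Every vertex of a minimal separator has a neighbour in the `a`-side component. -/
lemma min_sep_nbr [DecidableEq V] {A S : Finset V} {a b : V}
    (hSsub : S ⊆ A) (haS : a ∉ S) (hbS : b ∉ S)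
    (hsep : ¬ ReachIn G (↑A \ ↑S : Set V) a b)
    (hmin : ∀ S' : Finset V, S' ⊆ A → a ∉ S' → b ∉ S' →
      ¬ ReachIn G (↑A \ ↑S' : Set V) a b → S.card ≤ S'.card)
    {s₀ : V} (hs₀ : s₀ ∈ S) :
    ∃ u, (u ∈ (↑A \ ↑S : Set V) ∧ ReachIn G (↑A \ ↑S : Set V) a u) ∧ G.Adj u s₀ := by
  classical
  -- the separator minus s₀ does not separate
  have hre : ReachIn G (↑A \ ↑(S.erase s₀) : Set V) a b := by
    by_contra hcon
    have := hmin (S.erase s₀) ((S.erase_subset s₀).trans hSsub)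
      (fun h => haS (S.erase_subset s₀ h)) (fun h => hbS (S.erase_subset s₀ h)) hcon
    have hlt : (S.erase s₀).card < S.card := Finset.card_erase_lt_of_mem hs₀
    omega
  obtain ⟨p₀, hp₀⟩ := hre
  have hP : ∀ z ∈ p₀.bypass.support, z ∈ (↑A \ ↑(S.erase s₀) : Set V) :=
    fun z hz => hp₀ z (p₀.support_bypass_subset hz)
  set P := p₀.bypass with hPdef
  have hPpath : P.IsPath := p₀.bypass_isPath
  have hs₀P : s₀ ∈ P.support := by
    by_contra hcon
    refine hsep ⟨P, fun z hz => ?_⟩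
    obtain ⟨hzA, hzE⟩ := hP z hz
    refine ⟨hzA, fun hzS => hzE ?_⟩
    rw [Finset.coe_erase, Set.mem_diff]
    exact ⟨hzS, fun h => hcon (by rwa [Set.mem_singleton_iff.mp h] at hz)⟩
  have hs₀a : s₀ ≠ a := fun h => haS (h ▸ hs₀)
  have hW1 : (P.takeUntil s₀ hs₀P).IsPath := hPpath.takeUntil hs₀P
  have hW1r : (P.takeUntil s₀ hs₀P).reverse.IsPath := hW1.reverse
  obtain ⟨u, hadj, q1, hdec⟩ := Walk.not_nil_iff.mp
    (Walk.not_nil_of_ne (p := (P.takeUntil s₀ hs₀P).reverse) hs₀a)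
  rw [hdec, Walk.cons_isPath_iff] at hW1r
  have hq1sub : ∀ z ∈ q1.support, z ∈ (↑A \ ↑S : Set V) := by
    intro z hz
    have h1 : z ∈ (P.takeUntil s₀ hs₀P).reverse.support := by
      rw [hdec, Walk.support_cons]; exact List.mem_cons_of_mem _ hz
    rw [Walk.support_reverse, List.mem_reverse] at h1
    obtain ⟨hzA, hzE⟩ := hP z (Walk.support_takeUntil_subset _ hs₀P h1)
    refine ⟨hzA, fun hzS => ?_⟩
    have hzs₀ : z ≠ s₀ := fun h => hW1r.2 (h ▸ hz)
    exact hzE (by rw [Finset.coe_erase, Set.mem_diff]; exact ⟨hzS, hzs₀⟩)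
  refine ⟨u, ⟨hq1sub u q1.start_mem_support, ⟨q1.reverse, fun z hz => ?_⟩⟩, hadj.symm⟩
  rw [Walk.support_reverse, List.mem_reverse] at hz
  exact hq1sub z hz

/-- A minimal separator in a chordal graph is a clique. -/
lemma sep_clique [DecidableEq V] {A S : Finset V} {a b : V}
    (hch : ChordalOn G ↑A) (hSsub : S ⊆ A)
    (hsep : ¬ ReachIn G (↑A \ ↑S : Set V) a b)
    (hnbrA : ∀ s₀ ∈ S, ∃ u, (u ∈ (↑A \ ↑S : Set V) ∧ ReachIn G (↑A \ ↑S : Set V) a u) ∧ G.Adj u s₀)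
    (hnbrB : ∀ s₀ ∈ S, ∃ u, (u ∈ (↑A \ ↑S : Set V) ∧ ReachIn G (↑A \ ↑S : Set V) b u) ∧ G.Adj u s₀) :
    ∀ s₁ ∈ S, ∀ s₂ ∈ S, s₁ ≠ s₂ → G.Adj s₁ s₂ := by
  intro s₁ hs₁ s₂ hs₂ hne12
  by_contra hnad
  classical
  set D : Set V := (↑A \ ↑S : Set V) with hD
  set Ca : Set V := {x | x ∈ D ∧ ReachIn G D a x} with hCa
  set Cb : Set V := {x | x ∈ D ∧ ReachIn G D b x} with hCb
  have hdisj : ∀ z, z ∈ Ca → z ∈ Cb → False := fun z h1 h2 => hsep (h1.2.trans h2.2.symm)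
  have hcross : ∀ x ∈ Ca, ∀ y ∈ Cb, ¬ G.Adj x y := by
    intro x hx y hy hadj
    refine hsep ((hx.2.trans ⟨Walk.cons hadj Walk.nil, ?_⟩).trans hy.2.symm)
    intro z hz
    simp only [Walk.support_cons, Walk.support_nil, List.mem_cons, List.mem_singleton] at hz
    rcases hz with rfl | rfl | h
    · exact hx.1
    · exact hy.1
    · simp at h
  have hreachCa : ∀ u ∈ Ca, ∀ w ∈ Ca, ReachIn G Ca u w := by
    intro u hu w hw
    have h1 : ReachIn G Ca a u := reachIn_of_mem_reachSet hu.2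
    have h2 : ReachIn G Ca a w := reachIn_of_mem_reachSet hw.2
    exact h1.symm.trans h2
  have hreachCb : ∀ u ∈ Cb, ∀ w ∈ Cb, ReachIn G Cb u w := by
    intro u hu w hw
    have h1 : ReachIn G Cb b u := reachIn_of_mem_reachSet hu.2
    have h2 : ReachIn G Cb b w := reachIn_of_mem_reachSet hw.2
    exact h1.symm.trans h2
  have hCaCb : ∀ z ∈ Ca, z ∉ Cb := fun z h1 h2 => hdisj z h1 h2
  have hs₁Ca : s₁ ∉ Ca := fun h => h.1.2 (Finset.mem_coe.mpr hs₁)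
  have hs₂Ca : s₂ ∉ Ca := fun h => h.1.2 (Finset.mem_coe.mpr hs₂)
  have hs₁Cb : s₁ ∉ Cb := fun h => h.1.2 (Finset.mem_coe.mpr hs₁)
  have hs₂Cb : s₂ ∉ Cb := fun h => h.1.2 (Finset.mem_coe.mpr hs₂)
  -- valid walks on the a-side and b-side
  have side : ∀ (C : Set V), (∀ u ∈ C, ∀ w ∈ C, ReachIn G C u w) →
      (∃ u, (u ∈ C) ∧ G.Adj u s₁) → (∃ u, (u ∈ C) ∧ G.Adj u s₂) →
      ∃ W : G.Walk s₁ s₂, W.IsPath ∧ (∀ z ∈ W.support, z = s₁ ∨ z = s₂ ∨ z ∈ C) ∧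
        2 ≤ W.length ∧
        (∀ x y, x ∈ W.support → y ∈ W.support → G.Adj x y → s(x, y) ∉ W.edges → False) := by
    intro C hreach ⟨u₁, hu₁, hadj₁⟩ ⟨u₂, hu₂, hadj₂⟩
    have hex : ∃ ℓ, ∃ W : G.Walk s₁ s₂,
        (∀ z ∈ W.support, z = s₁ ∨ z = s₂ ∨ z ∈ C) ∧ W.length = ℓ := by
      obtain ⟨pc, hpc⟩ := hreach u₁ hu₁ u₂ hu₂
      refine ⟨_, Walk.cons hadj₁.symm (pc.append (Walk.cons hadj₂ Walk.nil)), fun z hz => ?_, rfl⟩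
      rw [Walk.support_cons, List.mem_cons] at hz
      rcases hz with rfl | hz
      · exact Or.inl rfl
      rw [Walk.mem_support_append_iff] at hz
      rcases hz with hz | hz
      · exact Or.inr (Or.inr (hpc z hz))
      · simp only [Walk.support_cons, Walk.support_nil, List.mem_cons, List.mem_singleton] at hz
        rcases hz with rfl | rfl | h
        · exact Or.inr (Or.inr hu₂)
        · exact Or.inr (Or.inl rfl)
        · simp at h
    classical
    set ℓ := Nat.find hex with hℓ
    obtain ⟨W₀, hW₀v, hW₀l⟩ := Nat.find_spec hex
    have hminl : ∀ W : G.Walk s₁ s₂, (∀ z ∈ W.support, z = s₁ ∨ z = s₂ ∨ z ∈ C) →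
        ℓ ≤ W.length := by
      intro W hW
      by_contra hcon
      push_neg at hcon
      exact Nat.find_min hex hcon ⟨W, hW, rfl⟩
    set P := W₀.bypass with hPdef
    have hPv : ∀ z ∈ P.support, z = s₁ ∨ z = s₂ ∨ z ∈ C :=
      fun z hz => hW₀v z (W₀.support_bypass_subset hz)
    have hPl : P.length = ℓ := le_antisymm ((W₀.length_bypass_le).trans (le_of_eq hW₀l)) (hminl P hPv)
    have hPpath : P.IsPath := W₀.bypass_isPath
    have hP2 : 2 ≤ P.length := by
      rcases Nat.lt_or_ge P.length 2 with h | h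
      · interval_cases h' : P.length
        · exact absurd (P.eq_of_length_eq_zero h') hne12
        · exact absurd (adj_of_length_one P h') hnad
      · exact h
    refine ⟨P, hPpath, hPv, hP2, ?_⟩
    intro x y hx hy hadj hnedge
    obtain ⟨q, hq1, hq2⟩ := exists_shorter P hx hy hadj hnedge
    have := hminl q (fun z hz => hPv z (hq1 z hz))
    omega
  obtain ⟨ua, hua, hadja⟩ := hnbrA s₁ hs₁
  obtain ⟨ua', hua', hadja'⟩ := hnbrA s₂ hs₂
  obtain ⟨ub, hub, hadjb⟩ := hnbrB s₁ hs₁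
  obtain ⟨ub', hub', hadjb'⟩ := hnbrB s₂ hs₂
  obtain ⟨Pa, hPaP, hPav, hPa2, hPachord⟩ := side Ca hreachCa
    ⟨ua, ⟨hua.1, hua.2⟩, hadja⟩ ⟨ua', ⟨hua'.1, hua'.2⟩, hadja'⟩
  obtain ⟨Pb, hPbP, hPbv, hPb2, hPbchord⟩ := side Cb hreachCb
    ⟨ub, ⟨hub.1, hub.2⟩, hadjb⟩ ⟨ub', ⟨hub'.1, hub'.2⟩, hadjb'⟩
  -- build the cycle
  have hint : ∀ z, z ∈ Pa.support → z ∈ Pb.support → z = s₁ ∨ z = s₂ := by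
    intro z h1 h2
    rcases hPav z h1 with rfl | rfl | hca
    · exact Or.inl rfl
    · exact Or.inr rfl
    rcases hPbv z h2 with rfl | rfl | hcb
    · exact Or.inl rfl
    · exact Or.inr rfl
    · exact absurd hcb (hCaCb z hca)
  have hcyc : (Pa.append Pb.reverse).IsCycle :=
    append_reverse_isCycle Pa Pb hPaP hPbP hPa2 hPb2 hint
  have hsupA : ∀ z ∈ (Pa.append Pb.reverse).support, z ∈ (↑A : Set V) := by
    intro z hz
    rw [Walk.mem_support_append_iff] at hz
    have hz' : z ∈ Pa.support ∨ z ∈ Pb.support := by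
      rcases hz with hz | hz
      · exact Or.inl hz
      · right; rwa [Walk.support_reverse, List.mem_reverse] at hz
    have : z = s₁ ∨ z = s₂ ∨ z ∈ Ca ∨ z ∈ Cb := by
      rcases hz' with h | h
      · rcases hPav z h with h' | h' | h'
        exacts [Or.inl h', Or.inr (Or.inl h'), Or.inr (Or.inr (Or.inl h'))]
      · rcases hPbv z h with h' | h' | h'
        exacts [Or.inl h', Or.inr (Or.inl h'), Or.inr (Or.inr (Or.inr h'))]
    rcases this with rfl | rfl | h | h
    · exact Finset.mem_coe.mpr (hSsub hs₁)
    · exact Finset.mem_coe.mpr (hSsub hs₂)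
    · exact h.1.1
    · exact h.1.1
  have hlen : 4 ≤ (Pa.append Pb.reverse).length := by
    rw [Walk.length_append, Walk.length_reverse]
    omega
  obtain ⟨x, y, hx, hy, hadj, hnedge⟩ := hch s₁ _ hcyc hsupA hlen
  have hclass : ∀ z ∈ (Pa.append Pb.reverse).support, z ∈ Pa.support ∨ z ∈ Pb.support := by
    intro z hz
    rw [Walk.mem_support_append_iff] at hz
    rcases hz with hz | hz
    · exact Or.inl hz
    · right; rwa [Walk.support_reverse, List.mem_reverse] at hz
  have hnea : s(x, y) ∉ Pa.edges := by
    intro h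
    exact hnedge (by rw [Walk.edges_append]; exact List.mem_append_left _ h)
  have hneb : s(x, y) ∉ Pb.edges := by
    intro h
    refine hnedge ?_
    rw [Walk.edges_append, Walk.edges_reverse]
    exact List.mem_append_right _ (List.mem_reverse.mpr h)
  have hCaOf : ∀ z ∈ Pa.support, z ∉ Pb.support → z ∈ Ca := by
    intro z h1 h2
    rcases hPav z h1 with rfl | rfl | h
    · exact absurd Pb.start_mem_support h2
    · exact absurd Pb.end_mem_support h2
    · exact h
  have hCbOf : ∀ z ∈ Pb.support, z ∉ Pa.support → z ∈ Cb := by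
    intro z h1 h2
    rcases hPbv z h1 with rfl | rfl | h
    · exact absurd Pa.start_mem_support h2
    · exact absurd Pa.end_mem_support h2
    · exact h
  rcases hclass x hx with hxa | hxb
  · by_cases hya : y ∈ Pa.support
    · exact hPachord x y hxa hya hadj hnea
    · have hyb : y ∈ Pb.support := (hclass y hy).resolve_left hya
      by_cases hxb : x ∈ Pb.support
      · exact hPbchord x y hxb hyb hadj hneb
      · exact hcross x (hCaOf x hxa hxb) y (hCbOf y hyb hya) hadj
  · by_cases hyb : y ∈ Pb.support
    · exact hPbchord x y hxb hyb hadj hneb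
    · have hya : y ∈ Pa.support := (hclass y hy).resolve_right hyb
      by_cases hxa : x ∈ Pa.support
      · exact hPachord x y hxa hya hadj hnea
      · exact hcross y (hCaOf y hya hyb) x (hCbOf x hxb hxa) hadj.symm

end StackedAux
namespace StackedAux

open SimpleGraph Walk

variable {V : Type*} {G : SimpleGraph V}

lemma extract_side [DecidableEq V] {k : ℕ} {A S : Finset V} {a b : V}
    (ih : ∀ B : Finset V, B.card ≤ k → B.Nonempty → ChordalOn G ↑B →
      (∀ x ∈ B, ∀ y ∈ B, x ≠ y → G.Adj x y) ∨
      (∃ v ∈ B, ∃ w ∈ B, v ≠ w ∧ ¬G.Adj v w ∧ SimpOn G ↑B v ∧ SimpOn G ↑B w))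
    (hch : ChordalOn G ↑A) (hcardA : A.card ≤ k + 1)
    (hSsub : S ⊆ A) (ha : a ∈ A) (hb : b ∈ A) (haS : a ∉ S) (hbS : b ∉ S)
    (hsep : ¬ ReachIn G (↑A \ ↑S : Set V) a b)
    (hSclique : ∀ s₁ ∈ S, ∀ s₂ ∈ S, s₁ ≠ s₂ → G.Adj s₁ s₂) :
    ∃ v, (v ∈ (↑A \ ↑S : Set V) ∧ ReachIn G (↑A \ ↑S : Set V) a v) ∧ SimpOn G ↑A v := by
  classical
  set D := (↑A \ ↑S : Set V) with hD
  set Ca : Set V := {x | x ∈ D ∧ ReachIn G D a x} with hCa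
  set CaF : Finset V := A.filter (fun z => z ∈ Ca) with hCaF
  set Ba : Finset V := S ∪ CaF with hBa
  have hCamem : ∀ z, z ∈ Ca → z ∈ (↑Ba : Set V) := by
    intro z hz
    rw [Finset.mem_coe, hBa, Finset.mem_union, hCaF, Finset.mem_filter]
    exact Or.inr ⟨Finset.mem_coe.mp hz.1.1, hz⟩
  have hBasubset : (↑Ba : Set V) ⊆ (↑A : Set V) := by
    intro z hz
    rw [Finset.mem_coe, hBa, Finset.mem_union] at hz
    rcases hz with hz | hz
    · exact Finset.mem_coe.mpr (hSsub hz)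
    · exact Finset.mem_coe.mpr (Finset.mem_of_mem_filter z hz)
  have haCa : a ∈ Ca := by
    have haD : a ∈ D := ⟨Finset.mem_coe.mpr ha, fun h => haS (Finset.mem_coe.mp h)⟩
    exact ⟨haD, ReachIn.refl haD⟩
  have hbBa : b ∉ Ba := by
    rw [hBa, Finset.mem_union, hCaF, Finset.mem_filter]
    rintro (h | ⟨-, h⟩)
    · exact hbS h
    · exact hsep h.2
  have hcard : Ba.card ≤ k := by
    have hsub : Ba ⊆ A.erase b := by
      intro z hz
      rw [Finset.mem_erase]
      exact ⟨fun h => hbBa (h ▸ hz), Finset.mem_coe.mp (hBasubset (Finset.mem_coe.mpr hz))⟩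
    have h1 := Finset.card_le_card hsub
    have h2 := Finset.card_erase_lt_of_mem hb
    omega
  have closure : ∀ v ∈ Ca, ∀ x ∈ (↑A : Set V), G.Adj v x → x ∈ (↑Ba : Set V) := by
    intro v hv x hxA hadj
    by_cases hxS : x ∈ S
    · rw [Finset.mem_coe, hBa, Finset.mem_union]
      exact Or.inl hxS
    have hxD : x ∈ D := ⟨hxA, fun h => hxS (Finset.mem_coe.mp h)⟩
    refine hCamem x ⟨hxD, hv.2.trans ⟨Walk.cons hadj Walk.nil, ?_⟩⟩
    intro z hz
    simp only [Walk.support_cons, Walk.support_nil, List.mem_cons, List.mem_singleton] at hz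
    rcases hz with rfl | rfl | h
    · exact hv.1
    · exact hxD
    · simp at h
  have lift : ∀ v, v ∈ Ca → SimpOn G ↑Ba v → SimpOn G ↑A v := by
    intro v hv hsimp
    refine ⟨hv.1.1, fun x hx y hy hax hay hxy => ?_⟩
    exact hsimp.2 x (closure v hv x hx hax) y (closure v hv y hy hay) hax hay hxy
  have hne : Ba.Nonempty := ⟨a, Finset.mem_coe.mp (hCamem a haCa)⟩
  rcases ih Ba hcard hne (hch.mono hBasubset) with hclq |
    ⟨v, hvB, w, hwB, hvw, hnadj, hsv, hsw⟩
  · refine ⟨a, ⟨haCa.1, haCa.2⟩, lift a haCa ⟨hCamem a haCa, fun x hx y hy _ _ hxy => ?_⟩⟩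
    exact hclq x (Finset.mem_coe.mp hx) y (Finset.mem_coe.mp hy) hxy
  · have hvw' : v ∉ S ∨ w ∉ S := by
      by_contra h'
      push_neg at h'
      exact hnadj (hSclique v h'.1 w h'.2 hvw)
    have hget : ∀ z, z ∈ Ba → z ∉ S → z ∈ Ca := by
      intro z hz hzS
      rw [hBa, Finset.mem_union, hCaF, Finset.mem_filter] at hz
      rcases hz with hz | hz
      · exact absurd hz hzS
      · exact hz.2
    rcases hvw' with h | h
    · have hvCa : v ∈ Ca := hget v hvB h
      exact ⟨v, ⟨hvCa.1, hvCa.2⟩, lift v hvCa hsv⟩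
    · have hwCa : w ∈ Ca := hget w hwB h
      exact ⟨w, ⟨hwCa.1, hwCa.2⟩, lift w hwCa hsw⟩

/-- Dirac's theorem : a finite chordal graph is complete or has two nonadjacent
simplicial vertices. -/
theorem dirac [DecidableEq V] (G : SimpleGraph V) :
    ∀ (k : ℕ) (A : Finset V), A.card ≤ k → A.Nonempty → ChordalOn G ↑A →
      (∀ x ∈ A, ∀ y ∈ A, x ≠ y → G.Adj x y) ∨
      (∃ v ∈ A, ∃ w ∈ A, v ≠ w ∧ ¬G.Adj v w ∧ SimpOn G ↑A v ∧ SimpOn G ↑A w) := by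
  intro k
  induction k with
  | zero =>
    intro A hA hne _
    rw [Nat.le_zero, Finset.card_eq_zero] at hA
    subst hA
    exact absurd hne (by simp)
  | succ k ih =>
    intro A hcard hne hch
    classical
    by_cases hclq : ∀ x ∈ A, ∀ y ∈ A, x ≠ y → G.Adj x y
    · exact Or.inl hclq
    push_neg at hclq
    obtain ⟨a, ha, b, hb, hab, hnadj⟩ := hclq
    -- the trivial separator works
    have hP0 : ¬ ReachIn G (↑A \ ↑((A.erase a).erase b) : Set V) a b := by
      rintro ⟨p, hp⟩
      cases p with
      | nil => exact hab rfl
      | cons hadj q =>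
        obtain ⟨hzA, hzE⟩ := hp _
          (by rw [Walk.support_cons]; exact List.mem_cons_of_mem _ q.start_mem_support)
        rename_i z
        have hz : z = a ∨ z = b := by
          by_contra h'
          push_neg at h'
          refine hzE ?_
          rw [Finset.mem_coe, Finset.mem_erase, Finset.mem_erase]
          exact ⟨h'.2, h'.1, Finset.mem_coe.mp hzA⟩
        rcases hz with rfl | rfl
        · exact hadj.ne rfl
        · exact hnadj hadj
    set cand := A.powerset.filter
      (fun S : Finset V => a ∉ S ∧ b ∉ S ∧ ¬ ReachIn G (↑A \ ↑S : Set V) a b) with hcand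
    have hmem0 : (A.erase a).erase b ∈ cand := by
      rw [hcand, Finset.mem_filter, Finset.mem_powerset]
      refine ⟨((A.erase a).erase_subset b).trans (A.erase_subset a), ?_, ?_, hP0⟩
      · intro h
        exact (Finset.mem_erase.mp ((Finset.erase_subset _ _) h)).1 rfl
      · intro h
        exact (Finset.mem_erase.mp h).1 rfl
    obtain ⟨S, hScand, hSmin⟩ := Finset.exists_min_image cand Finset.card ⟨_, hmem0⟩
    rw [hcand, Finset.mem_filter, Finset.mem_powerset] at hScand
    obtain ⟨hSsub, haS, hbS, hsep⟩ := hScand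
    have hmin : ∀ S' : Finset V, S' ⊆ A → a ∉ S' → b ∉ S' →
        ¬ ReachIn G (↑A \ ↑S' : Set V) a b → S.card ≤ S'.card := by
      intro S' h1 h2 h3 h4
      exact hSmin S' (by rw [hcand, Finset.mem_filter, Finset.mem_powerset]; exact ⟨h1, h2, h3, h4⟩)
    have hsep' : ¬ ReachIn G (↑A \ ↑S : Set V) b a := fun h => hsep h.symm
    have hmin' : ∀ S' : Finset V, S' ⊆ A → b ∉ S' → a ∉ S' →
        ¬ ReachIn G (↑A \ ↑S' : Set V) b a → S.card ≤ S'.card :=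
      fun S' h1 h2 h3 h4 => hmin S' h1 h3 h2 (fun h => h4 h.symm)
    have hnbrA : ∀ s₀ ∈ S, ∃ u, (u ∈ (↑A \ ↑S : Set V) ∧
        ReachIn G (↑A \ ↑S : Set V) a u) ∧ G.Adj u s₀ :=
      fun s₀ hs₀ => min_sep_nbr hSsub haS hbS hsep hmin hs₀
    have hnbrB : ∀ s₀ ∈ S, ∃ u, (u ∈ (↑A \ ↑S : Set V) ∧
        ReachIn G (↑A \ ↑S : Set V) b u) ∧ G.Adj u s₀ :=
      fun s₀ hs₀ => min_sep_nbr hSsub hbS haS hsep' hmin' hs₀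
    have hclique := sep_clique hch hSsub hsep hnbrA hnbrB
    obtain ⟨v, hva, hsv⟩ := extract_side ih hch hcard hSsub ha hb haS hbS hsep hclique
    obtain ⟨w, hwb, hsw⟩ := extract_side ih hch hcard hSsub hb ha hbS haS hsep' hclique
    refine Or.inr ⟨v, Finset.mem_coe.mp hva.1.1, w, Finset.mem_coe.mp hwb.1.1, ?_, ?_, hsv, hsw⟩
    · rintro rfl
      exact hsep (hva.2.trans hwb.2.symm)
    · intro hadj
      refine hsep ((hva.2.trans ⟨Walk.cons hadj Walk.nil, ?_⟩).trans hwb.2.symm)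
      intro z hz
      simp only [Walk.support_cons, Walk.support_nil, List.mem_cons, List.mem_singleton] at hz
      rcases hz with rfl | rfl | h
      · exact hva.1
      · exact hwb.1
      · simp at h

end StackedAux
namespace StackedAux

open SimpleGraph Walk

variable {V : Type*} {G : SimpleGraph V}

lemma induce_singleton_connected (x : V) : (G.induce {x}).Connected := by
  haveI : Nonempty ({x} : Set V) := ⟨⟨x, rfl⟩⟩
  refine ⟨fun a b => ?_⟩
  have : a = b := Subtype.ext (a.2.trans b.2.symm)
  exact this ▸ Reachable.refl _

lemma hasTopMinor5 {x : Fin 5 → V} (hadj : ∀ i j, i ≠ j → G.Adj (x i) (x j)) :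
    HasGraphMinor G (⊤ : SimpleGraph (Fin 5)) := by
  refine ⟨fun i => {x i}, fun i => ⟨x i, rfl⟩, fun i => induce_singleton_connected _,
    fun i j hij => ?_, fun i j hij => ⟨x i, rfl, x j, rfl, hadj i j hij.ne⟩⟩
  exact Set.disjoint_singleton.mpr (hadj i j hij).ne

lemma not_complete_of_planar [Fintype V] (hp : Planar G) (h5 : 5 ≤ Fintype.card V)
    (hclq : ∀ x y : V, x ≠ y → G.Adj x y) : False := by
  classical
  obtain ⟨f⟩ := Function.Embedding.nonempty_of_card_le
    (by simpa using h5 : Fintype.card (Fin 5) ≤ Fintype.card V)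
  exact hp.1 (hasTopMinor5 (fun i j hij => hclq _ _ (fun h => hij (f.injective h))))

lemma exists_four {α : Type*} {s : Set α} (hfin : s.Finite) (h : 4 ≤ s.ncard) :
    ∃ a b c d, a ∈ s ∧ b ∈ s ∧ c ∈ s ∧ d ∈ s ∧ a ≠ b ∧ a ≠ c ∧ a ≠ d ∧
      b ≠ c ∧ b ≠ d ∧ c ≠ d := by
  classical
  set F := hfin.toFinset with hF
  have hcard : 4 ≤ F.card := by
    rw [hF]
    rwa [Set.ncard_eq_toFinset_card s hfin] at h
  obtain ⟨a, ha⟩ := Finset.card_pos.mp (by omega : 0 < F.card)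
  have h1 : 3 ≤ (F.erase a).card := by
    rw [Finset.card_erase_of_mem ha]; omega
  obtain ⟨b, hb⟩ := Finset.card_pos.mp (by omega : 0 < (F.erase a).card)
  have h2 : 2 ≤ ((F.erase a).erase b).card := by
    rw [Finset.card_erase_of_mem hb]; omega
  obtain ⟨c, hc⟩ := Finset.card_pos.mp (by omega : 0 < ((F.erase a).erase b).card)
  have h3 : 1 ≤ (((F.erase a).erase b).erase c).card := by
    rw [Finset.card_erase_of_mem hc]; omega
  obtain ⟨d, hd⟩ := Finset.card_pos.mp
    (by omega : 0 < (((F.erase a).erase b).erase c).card)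
  have hbF : b ∈ F := Finset.mem_of_mem_erase hb
  have hcF : c ∈ F := Finset.mem_of_mem_erase (Finset.mem_of_mem_erase hc)
  have hdF : d ∈ F :=
    Finset.mem_of_mem_erase (Finset.mem_of_mem_erase (Finset.mem_of_mem_erase hd))
  have hmem : ∀ z ∈ F, z ∈ s := fun z hz => (Set.Finite.mem_toFinset hfin).mp hz
  refine ⟨a, b, c, d, hmem a ha, hmem b hbF, hmem c hcF, hmem d hdF,
    ?_, ?_, ?_, ?_, ?_, ?_⟩
  · exact fun h' => (Finset.mem_erase.mp hb).1 h'.symm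
  · exact fun h' => (Finset.mem_erase.mp (Finset.mem_of_mem_erase hc)).1 h'.symm
  · exact fun h' =>
      (Finset.mem_erase.mp (Finset.mem_of_mem_erase (Finset.mem_of_mem_erase hd))).1 h'.symm
  · exact fun h' => (Finset.mem_erase.mp hc).1 h'.symm
  · exact fun h' => (Finset.mem_erase.mp (Finset.mem_of_mem_erase hd)).1 h'.symm
  · exact fun h' => (Finset.mem_erase.mp hd).1 h'.symm

lemma simplicial_deg3 {n : ℕ} {G : SimpleGraph (Fin n)} (hc : Chordal G) (hp : Planar G)
    (ht : ThreeConnected G) (h5 : 5 ≤ n) :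
    ∃ v a b c : Fin n, a ≠ b ∧ a ≠ c ∧ b ≠ c ∧ G.Adj a b ∧ G.Adj a c ∧ G.Adj b c ∧
      (∀ z, G.Adj v z ↔ (z = a ∨ z = b ∨ z = c)) := by
  classical
  have hdi := dirac G n Finset.univ (by simp) ⟨⟨0, by omega⟩, Finset.mem_univ _⟩
    (by rw [Finset.coe_univ]; exact Chordal.chordalOn hc _)
  rcases hdi with hclq | ⟨v, -, w, -, -, -, hsv, -⟩
  · exact absurd (fun x y hxy => hclq x (Finset.mem_univ x) y (Finset.mem_univ y) hxy)
      (fun h => not_complete_of_planar hp (by simpa using h5) h)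
  have hsimp : ∀ x y, G.Adj v x → G.Adj v y → x ≠ y → G.Adj x y := by
    intro x y h1 h2 h3
    exact hsv.2 x (by simp) y (by simp) h1 h2 h3
  set Nv : Set (Fin n) := {z | G.Adj v z} with hNv
  have hfin : Nv.Finite := Set.toFinite _
  have hge3 : ¬ Nv.ncard ≤ 2 := by
    intro hle
    obtain ⟨-, hreach⟩ := induce_connected_iff.mp (ht.2 Nv hle)
    have hvmem : v ∈ Nvᶜ := fun h => G.irrefl h
    have hwex : ∃ w', w' ∈ Nvᶜ ∧ w' ≠ v := by
      by_contra hcon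
      push_neg at hcon
      have hsub : Nvᶜ ⊆ {v} := fun z hz => hcon z hz
      have h1 := Set.ncard_le_ncard hsub (Set.finite_singleton v)
      rw [Set.ncard_singleton] at h1
      have h2 := Set.ncard_add_ncard_compl Nv
      rw [Nat.card_eq_fintype_card, Fintype.card_fin] at h2
      omega
    obtain ⟨w', hw', hwv⟩ := hwex
    obtain ⟨p, hpsup⟩ := hreach v hvmem w' hw'
    cases p with
    | nil => exact hwv rfl
    | cons hadj q =>
      exact hpsup _
        (by rw [Walk.support_cons]; exact List.mem_cons_of_mem _ q.start_mem_support) hadj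
  have hle3 : ¬ 4 ≤ Nv.ncard := by
    intro hge
    obtain ⟨a, b, c, d, haN, hbN, hcN, hdN, hab, hac, had, hbc, hbd, hcd⟩ :=
      exists_four hfin hge
    have hva : G.Adj v a := haN
    have hvb : G.Adj v b := hbN
    have hvc : G.Adj v c := hcN
    have hvd : G.Adj v d := hdN
    have hAB : G.Adj a b := hsimp a b hva hvb hab
    have hAC : G.Adj a c := hsimp a c hva hvc hac
    have hAD : G.Adj a d := hsimp a d hva hvd had
    have hBC : G.Adj b c := hsimp b c hvb hvc hbc
    have hBD : G.Adj b d := hsimp b d hvb hvd hbd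
    have hCD : G.Adj c d := hsimp c d hvc hvd hcd
    refine hp.1 (hasTopMinor5 (x := fun i =>
      if i.val = 0 then v else if i.val = 1 then a else if i.val = 2 then b
      else if i.val = 3 then c else d) ?_)
    intro i j hij
    fin_cases i <;> fin_cases j <;> (try simp) <;>
      first
        | exact absurd rfl hij
        | exact hva
        | exact hvb
        | exact hvc
        | exact hvd
        | exact hva.symm
        | exact hvb.symm
        | exact hvc.symm
        | exact hvd.symm
        | exact hAB
        | exact hAC
        | exact hAD
        | exact hBC
        | exact hBD
        | exact hCD
        | exact hAB.symm
        | exact hAC.symm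
        | exact hAD.symm
        | exact hBC.symm
        | exact hBD.symm
        | exact hCD.symm
  have h3 : Nv.ncard = 3 := by omega
  obtain ⟨a, b, c, hab, hac, hbc, heq⟩ := Set.ncard_eq_three.mp h3
  have haN : G.Adj v a := by
    have : a ∈ Nv := by rw [heq]; exact Set.mem_insert _ _
    exact this
  have hbN : G.Adj v b := by
    have : b ∈ Nv := by rw [heq]; exact Set.mem_insert_of_mem _ (Set.mem_insert _ _)
    exact this
  have hcN : G.Adj v c := by
    have : c ∈ Nv := by
      rw [heq]; exact Set.mem_insert_of_mem _ (Set.mem_insert_of_mem _ rfl)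
    exact this
  refine ⟨v, a, b, c, hab, hac, hbc, hsimp a b haN hbN hab, hsimp a c haN hcN hac,
    hsimp b c hbN hcN hbc, fun z => ?_⟩
  have : G.Adj v z ↔ z ∈ Nv := Iff.rfl
  rw [this, heq]
  simp

end StackedAux
namespace StackedAux

open SimpleGraph Walk

lemma base_four {G : SimpleGraph (Fin 4)} (ht : ThreeConnected G) : IsStacked G := by
  refine ⟨le_refl 4, fun i j hi hj hij => ?_, fun k hk => absurd k.isLt (by omega)⟩
  classical
  have hij2 : ({i, j} : Set (Fin 4)).ncard = 2 := by
    rw [Set.ncard_insert_of_notMem (by simpa using hij) (Set.finite_singleton j),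
      Set.ncard_singleton]
  have hsc : (({i, j} : Set (Fin 4))ᶜ).ncard ≤ 2 := by
    have h2 := Set.ncard_add_ncard_compl ({i, j} : Set (Fin 4))
    rw [Nat.card_eq_fintype_card, Fintype.card_fin, hij2] at h2
    omega
  obtain ⟨-, hreach⟩ := induce_connected_iff.mp (ht.2 _ hsc)
  have hssc : (({i, j} : Set (Fin 4))ᶜ)ᶜ = ({i, j} : Set (Fin 4)) := compl_compl _
  have hi' : i ∈ (({i, j} : Set (Fin 4))ᶜ)ᶜ := by rw [hssc]; exact Set.mem_insert _ _
  have hj' : j ∈ (({i, j} : Set (Fin 4))ᶜ)ᶜ := by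
    rw [hssc]; exact Set.mem_insert_of_mem _ rfl
  obtain ⟨p, hp⟩ := hreach i hi' j hj'
  cases p with
  | nil => exact absurd rfl hij
  | cons hadj q =>
    rename_i z
    have hz := hp z
      (by rw [Walk.support_cons]; exact List.mem_cons_of_mem _ q.start_mem_support)
    rw [hssc] at hz
    simp only [Set.mem_insert_iff, Set.mem_singleton_iff] at hz
    rcases hz with rfl | rfl
    · exact absurd hadj (G.irrefl)
    · exact hadj

lemma walk_pull {m : ℕ} {G₁ : SimpleGraph (Fin (m + 1))} :
    ∀ {p q : Fin (m + 1)} (w : G₁.Walk p q), (∀ z ∈ w.support, z ≠ Fin.last m) →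
    ∀ {x y : Fin m}, p = x.castSucc → q = y.castSucc →
    ∃ w' : (G₁.comap Fin.castSucc).Walk x y, ∀ z ∈ w'.support, z.castSucc ∈ w.support := by
  intro p q w
  induction w with
  | nil =>
    intro hsup x y hx hy
    have hxy : x = y := Fin.castSucc_injective m (by rw [← hx, ← hy])
    subst hxy
    refine ⟨Walk.nil, fun z hz => ?_⟩
    simp only [Walk.support_nil, List.mem_singleton] at hz
    subst hz
    rw [← hx]
    exact Walk.start_mem_support _
  | cons h r ih =>
    intro hsup x y hx hy
    rename_i u z w₂
    have hz : z ≠ Fin.last m := hsup z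
      (by rw [Walk.support_cons]; exact List.mem_cons_of_mem _ r.start_mem_support)
    obtain ⟨z', hz'⟩ : ∃ z', z = z'.castSucc :=
      ⟨z.castPred hz, (Fin.castSucc_castPred z hz).symm⟩
    obtain ⟨w', hw'⟩ := ih
      (fun t ht => hsup t (by rw [Walk.support_cons]; exact List.mem_cons_of_mem _ ht)) hz' hy
    have hadj : (G₁.comap Fin.castSucc).Adj x z' := by
      show G₁.Adj x.castSucc z'.castSucc
      rw [← hx, ← hz']
      exact h
    refine ⟨Walk.cons hadj w', fun t ht => ?_⟩
    rw [Walk.support_cons, List.mem_cons] at ht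
    rcases ht with rfl | ht
    · rw [← hx]
      exact Walk.start_mem_support _
    · rw [Walk.support_cons]
      exact List.mem_cons_of_mem _ (hw' t ht)

/-- Extend a permutation of `Fin m` to `Fin (m+1)` fixing the last element. -/
def extEquiv {m : ℕ} (φ : Fin m ≃ Fin m) : Fin (m + 1) ≃ Fin (m + 1) where
  toFun x := if h : x = Fin.last m then Fin.last m else (φ (x.castPred h)).castSucc
  invFun x := if h : x = Fin.last m then Fin.last m else (φ.symm (x.castPred h)).castSucc
  left_inv := by
    intro x
    by_cases h : x = Fin.last m
    · simp [h]
    · simp only [dif_neg h]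
      rw [dif_neg (Fin.castSucc_lt_last _).ne, Fin.castPred_castSucc,
        Equiv.symm_apply_apply, Fin.castSucc_castPred]
  right_inv := by
    intro x
    by_cases h : x = Fin.last m
    · simp [h]
    · simp only [dif_neg h]
      rw [dif_neg (Fin.castSucc_lt_last _).ne, Fin.castPred_castSucc,
        Equiv.apply_symm_apply, Fin.castSucc_castPred]

lemma extEquiv_castSucc {m : ℕ} (φ : Fin m ≃ Fin m) (i : Fin m) :
    extEquiv φ i.castSucc = (φ i).castSucc := by
  show (if h : i.castSucc = Fin.last m then Fin.last m
    else (φ ((i.castSucc).castPred h)).castSucc) = (φ i).castSucc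
  rw [dif_neg (Fin.castSucc_lt_last _).ne, Fin.castPred_castSucc]

lemma extEquiv_last {m : ℕ} (φ : Fin m ≃ Fin m) : extEquiv φ (Fin.last m) = Fin.last m := by
  show (if h : Fin.last m = Fin.last m then Fin.last m
    else (φ ((Fin.last m).castPred h)).castSucc) = Fin.last m
  rw [dif_pos rfl]

lemma extEquiv_symm {m : ℕ} (φ : Fin m ≃ Fin m) : (extEquiv φ).symm = extEquiv φ.symm := by
  ext x
  rfl

end StackedAux
namespace StackedAux

open SimpleGraph Walk

theorem forward : ∀ n : ℕ, ∀ G : SimpleGraph (Fin n), Chordal G → Planar G → ThreeConnected G →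
    ∃ G' : SimpleGraph (Fin n), IsStacked G' ∧ Nonempty (G ≃g G') := by
  intro n
  induction n using Nat.strong_induction_on with
  | _ n ih =>
    intro G hc hp ht
    have h4 : 4 ≤ n := by simpa using ht.1
    rcases eq_or_lt_of_le h4 with h4' | h5
    · subst h4'
      exact ⟨G, base_four ht, ⟨Iso.refl⟩⟩
    · obtain ⟨m, rfl⟩ : ∃ m, n = m + 1 := ⟨n - 1, by omega⟩
      have hm4 : 4 ≤ m := by omega
      classical
      obtain ⟨v, a, b, c, hab, hac, hbc, hAB, hAC, hBC, hNv⟩ :=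
        simplicial_deg3 hc hp ht (by omega)
      set e₀ : Fin (m+1) ≃ Fin (m+1) := Equiv.swap v (Fin.last m) with he₀
      set G₁ : SimpleGraph (Fin (m+1)) := G.comap e₀ with hG₁
      have iso₀ : G₁ ≃g G := ⟨e₀, Iff.rfl⟩
      have hc₁ : Chordal G₁ := chordal_of_iso iso₀.symm hc
      have hp₁ : Planar G₁ := (planar_iff_of_iso iso₀).mpr hp
      have ht₁ : ThreeConnected G₁ := threeConnected_of_iso iso₀.symm ht
      have he₀inv : ∀ x, e₀ (e₀ x) = x := fun x => Equiv.swap_apply_self v (Fin.last m) x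
      have he₀last : e₀ (Fin.last m) = v := Equiv.swap_apply_right v (Fin.last m)
      have hG₁adj : ∀ p q : Fin (m+1), G.Adj p q → G₁.Adj (e₀ p) (e₀ q) := by
        intro p q h
        show G.Adj (e₀ (e₀ p)) (e₀ (e₀ q))
        rw [he₀inv, he₀inv]
        exact h
      have hlastadj : ∀ z, G₁.Adj (Fin.last m) z ↔ (z = e₀ a ∨ z = e₀ b ∨ z = e₀ c) := by
        intro z
        show G.Adj (e₀ (Fin.last m)) (e₀ z) ↔ _
        rw [he₀last, hNv (e₀ z)]
        have hiff : ∀ t : Fin (m+1), e₀ z = t ↔ z = e₀ t := by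
          intro t
          constructor
          · intro h; rw [← h, he₀inv]
          · intro h; rw [h, he₀inv]
        rw [hiff a, hiff b, hiff c]
      have htri : ∀ u w, G₁.Adj (Fin.last m) u → G₁.Adj (Fin.last m) w → u ≠ w →
          G₁.Adj u w := by
        intro u w h1 h2 h3
        rw [hlastadj] at h1 h2
        rcases h1 with rfl | rfl | rfl <;> rcases h2 with rfl | rfl | rfl <;>
          first
            | exact absurd rfl h3
            | exact hG₁adj _ _ hAB
            | exact hG₁adj _ _ hAC
            | exact hG₁adj _ _ hBC
            | exact hG₁adj _ _ hAB.symm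
            | exact hG₁adj _ _ hAC.symm
            | exact hG₁adj _ _ hBC.symm
      -- the restricted graph on Fin m
      set H : SimpleGraph (Fin m) := G₁.comap Fin.castSucc with hH
      have hcastinj : Function.Injective (Fin.castSucc : Fin m → Fin (m+1)) :=
        Fin.castSucc_injective m
      have hcH : Chordal H := by
        intro u cw hcyc hlen
        let f : H →g G₁ := ⟨Fin.castSucc, fun h => h⟩
        have hcyc' : (cw.map f).IsCycle := hcyc.map hcastinj
        have hlen' : 4 ≤ (cw.map f).length := by rwa [Walk.length_map]
        obtain ⟨x, y, hx, hy, hadj, hne⟩ := hc₁ _ _ hcyc' hlen'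
        rw [Walk.support_map, List.mem_map] at hx hy
        obtain ⟨x₀, hx₀, rfl⟩ := hx
        obtain ⟨y₀, hy₀, rfl⟩ := hy
        refine ⟨x₀, y₀, hx₀, hy₀, hadj, fun he => hne ?_⟩
        rw [Walk.edges_map]
        exact List.mem_map_of_mem he
      have hpH : Planar H := planar_mono Fin.castSucc hcastinj (fun _ _ h => h) hp₁
      have htH : ThreeConnected H := by
        refine ⟨by simpa using hm4, fun s hs => ?_⟩
        have hTcard : (Fin.castSucc '' s : Set (Fin (m+1))).ncard ≤ 2 := by
          rw [Set.ncard_image_of_injective s hcastinj]; exact hs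
        obtain ⟨-, hreach⟩ := induce_connected_iff.mp (ht₁.2 _ hTcard)
        rw [induce_connected_iff]
        have hsne : sᶜ.Nonempty := by
          by_contra hcon
          rw [Set.not_nonempty_iff_eq_empty, Set.compl_empty_iff] at hcon
          rw [hcon, Set.ncard_univ, Nat.card_eq_fintype_card, Fintype.card_fin] at hs
          omega
        refine ⟨hsne, fun x hx y hy => ?_⟩
        have hmem : ∀ t : Fin m, t ∈ sᶜ →
            t.castSucc ∈ ((Fin.castSucc '' s : Set (Fin (m+1))))ᶜ := by
          intro t htc h'
          obtain ⟨t₀, ht₀, heqt⟩ := h'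
          exact htc (hcastinj heqt ▸ ht₀)
        have hr1 := hreach _ (hmem x hx) _ (hmem y hy)
        have hxl : x.castSucc ≠ Fin.last m := (Fin.castSucc_lt_last x).ne
        have hyl : y.castSucc ≠ Fin.last m := (Fin.castSucc_lt_last y).ne
        obtain ⟨w, hwsup⟩ := reachIn_avoid htri hxl hyl hr1
        obtain ⟨w', hw'⟩ := walk_pull w
          (fun z hz h' => (hwsup z hz).2 (Set.mem_singleton_iff.mpr h')) rfl rfl
        refine ⟨w', fun z hz hzs => ?_⟩
        exact (hwsup _ (hw' z hz)).1 ⟨z, hzs, rfl⟩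
      obtain ⟨G'', hstk, ⟨φiso⟩⟩ := ih m (by omega) H hcH hpH htH
      set φ : Fin m ≃ Fin m := φiso.toEquiv with hφ
      have hφadj : ∀ i j : Fin m, G''.Adj (φ i) (φ j) ↔ H.Adj i j := fun i j => φiso.map_rel_iff
      set e₁ : Fin (m+1) ≃ Fin (m+1) := extEquiv φ with he₁
      set G' : SimpleGraph (Fin (m+1)) := G₁.comap ⇑e₁.symm with hG'
      have iso₁ : G₁ ≃g G' := by
        refine ⟨e₁, ?_⟩
        intro p q
        show G₁.Adj (e₁.symm (e₁ p)) (e₁.symm (e₁ q)) ↔ G₁.Adj p q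
        rw [Equiv.symm_apply_apply, Equiv.symm_apply_apply]
      have isoG : G ≃g G' := iso₀.symm.trans iso₁
      have he₁cast : ∀ i : Fin m, e₁ i.castSucc = (φ i).castSucc := extEquiv_castSucc φ
      have he₁last : e₁ (Fin.last m) = Fin.last m := extEquiv_last φ
      have he₁symm_cast : ∀ i : Fin m, e₁.symm i.castSucc = (φ.symm i).castSucc := by
        intro i
        rw [he₁, extEquiv_symm]
        exact extEquiv_castSucc φ.symm i
      have he₁symm_last : e₁.symm (Fin.last m) = Fin.last m := by
        rw [he₁, extEquiv_symm]
        exact extEquiv_last φ.symm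
      have hG'cast : ∀ i j : Fin m, G'.Adj i.castSucc j.castSucc ↔ G''.Adj i j := by
        intro i j
        show G₁.Adj (e₁.symm i.castSucc) (e₁.symm j.castSucc) ↔ _
        rw [he₁symm_cast, he₁symm_cast]
        have h1 : G₁.Adj (φ.symm i).castSucc (φ.symm j).castSucc ↔
            H.Adj (φ.symm i) (φ.symm j) := Iff.rfl
        rw [h1, ← hφadj, Equiv.apply_symm_apply, Equiv.apply_symm_apply]
      have hG'last : ∀ j, G'.Adj (Fin.last m) j ↔
          (j = e₁ (e₀ a) ∨ j = e₁ (e₀ b) ∨ j = e₁ (e₀ c)) := by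
        intro j
        show G₁.Adj (e₁.symm (Fin.last m)) (e₁.symm j) ↔ _
        rw [he₁symm_last, hlastadj]
        have hiff : ∀ t, e₁.symm j = t ↔ j = e₁ t := by
          intro t
          constructor
          · intro h; rw [← h, Equiv.apply_symm_apply]
          · intro h; rw [h, Equiv.symm_apply_apply]
        rw [hiff, hiff, hiff]
      refine ⟨G', ⟨by omega, ?_, ?_⟩, ⟨isoG⟩⟩
      · -- K4 clause
        intro i j hi hj hij
        have hil : i ≠ Fin.last m := by
          intro h
          rw [h] at hi
          have : (Fin.last m).val = m := rfl
          omega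
        have hjl : j ≠ Fin.last m := by
          intro h
          rw [h] at hj
          have : (Fin.last m).val = m := rfl
          omega
        have hcc : G'.Adj (i.castPred hil).castSucc (j.castPred hjl).castSucc ↔
            G''.Adj (i.castPred hil) (j.castPred hjl) := hG'cast _ _
        rw [Fin.castSucc_castPred, Fin.castSucc_castPred] at hcc
        rw [hcc]
        refine hstk.2.1 _ _ ?_ ?_ ?_
        · show i.val < 4; exact hi
        · show j.val < 4; exact hj
        · intro h
          apply hij
          rw [← Fin.castSucc_castPred i hil, ← Fin.castSucc_castPred j hjl, h]
      · -- stacking clause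
        intro k hk
        by_cases hkl : k = Fin.last m
        · subst hkl
          have hvadj : ∀ t, (t = a ∨ t = b ∨ t = c) → G.Adj v t :=
            fun t h => (hNv t).mpr h
          have hane : ∀ t, (t = a ∨ t = b ∨ t = c) → e₀ t ≠ Fin.last m := by
            intro t h heq
            have h1 : t = v := by
              have := congrArg e₀ heq
              rwa [he₀inv, he₀last] at this
            exact (hvadj t h).ne' h1
          have he₁ne : ∀ t, (t = a ∨ t = b ∨ t = c) → e₁ (e₀ t) ≠ Fin.last m := by
            intro t h heq
            apply hane t h
            have := congrArg e₁.symm heq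
            rwa [Equiv.symm_apply_apply, he₁symm_last] at this
          have hval : ∀ t, (t = a ∨ t = b ∨ t = c) →
              (e₁ (e₀ t)).val < (Fin.last m).val :=
            fun t h => Fin.val_lt_last (he₁ne t h)
          have hG'pair : ∀ p q : Fin (m+1), G.Adj p q → G'.Adj (e₁ (e₀ p)) (e₁ (e₀ q)) := by
            intro p q h
            show G₁.Adj (e₁.symm (e₁ (e₀ p))) (e₁.symm (e₁ (e₀ q)))
            rw [Equiv.symm_apply_apply, Equiv.symm_apply_apply]
            exact hG₁adj p q h
          refine ⟨e₁ (e₀ a), e₁ (e₀ b), e₁ (e₀ c),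
            hval a (Or.inl rfl), hval b (Or.inr (Or.inl rfl)), hval c (Or.inr (Or.inr rfl)),
            fun h => hab (e₀.injective (e₁.injective h)),
            fun h => hac (e₀.injective (e₁.injective h)),
            fun h => hbc (e₀.injective (e₁.injective h)),
            hG'pair a b hAB, hG'pair a c hAC, hG'pair b c hBC,
            fun j _ => hG'last j, ?_⟩
          have huniv : {j : Fin (m+1) | j.val ≤ (Fin.last m).val} = Set.univ := by
            ext j
            simp only [Set.mem_setOf_eq, Set.mem_univ, iff_true]
            have := j.isLt
            show j.val ≤ m
            omega
          rw [huniv]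
          exact (planar_iff_of_iso (induceUnivIso G')).mpr ((planar_iff_of_iso isoG).mp hp)
        · -- k below the top
          have hkm : k.val < m := Fin.val_lt_last hkl
          have hkk : (k.castPred hkl).castSucc = k := Fin.castSucc_castPred k hkl
          have hk4 : 4 ≤ (k.castPred hkl).val := hk
          obtain ⟨a'', b'', c'', h1, h2, h3, h4', h5', h6', h7, h8, h9, hex, hpl⟩ :=
            hstk.2.2 _ hk4
          refine ⟨a''.castSucc, b''.castSucc, c''.castSucc, ?_, ?_, ?_,
            fun h => h4' (hcastinj h), fun h => h5' (hcastinj h), fun h => h6' (hcastinj h),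
            ?_, ?_, ?_, ?_, ?_⟩
          · show a''.val < k.val
            have : (k.castPred hkl).val = k.val := rfl
            omega
          · show b''.val < k.val
            have : (k.castPred hkl).val = k.val := rfl
            omega
          · show c''.val < k.val
            have : (k.castPred hkl).val = k.val := rfl
            omega
          · exact (hG'cast _ _).mpr h7
          · exact (hG'cast _ _).mpr h8
          · exact (hG'cast _ _).mpr h9
          · intro j hj
            have hjl : j ≠ Fin.last m := by
              intro h
              rw [h] at hj
              have : (Fin.last m).val = m := rfl
              omega
            have hjj : (j.castPred hjl).castSucc = j := Fin.castSucc_castPred j hjl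
            have hstep := hG'cast (k.castPred hkl) (j.castPred hjl)
            rw [hkk, hjj] at hstep
            rw [hstep, hex (j.castPred hjl) (by show j.val < k.val; exact hj)]
            have hcc : ∀ t : Fin m, j.castPred hjl = t ↔ j = t.castSucc := by
              intro t
              constructor
              · intro h; rw [← hjj, h]
              · intro h
                exact hcastinj (by rw [hjj, h])
            rw [hcc, hcc, hcc]
          · -- prefix planarity
            have hzl : ∀ z : {j : Fin (m+1) | j.val ≤ k.val}, (z : Fin (m+1)) ≠ Fin.last m := by
              intro z h
              have hz2 : (z : Fin (m+1)).val ≤ k.val := z.2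
              rw [h] at hz2
              have : (Fin.last m).val = m := rfl
              omega
            have hmap : ∀ z : {j : Fin (m+1) | j.val ≤ k.val},
                (((z : Fin (m+1)).castPred (hzl z))).val ≤ (k.castPred hkl).val := by
              intro z
              show (z : Fin (m+1)).val ≤ k.val
              exact z.2
            refine planar_mono
              (fun z => ⟨(z : Fin (m+1)).castPred (hzl z), hmap z⟩) ?_ ?_ hpl
            · intro z1 z2 h
              have h' : (z1 : Fin (m+1)).castPred (hzl z1) =
                  (z2 : Fin (m+1)).castPred (hzl z2) := congrArg Subtype.val h
              apply Subtype.ext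
              rw [← Fin.castSucc_castPred (z1 : Fin (m+1)) (hzl z1),
                ← Fin.castSucc_castPred (z2 : Fin (m+1)) (hzl z2), h']
            · intro z1 z2 hadj
              have hadj' : G'.Adj (z1 : Fin (m+1)) (z2 : Fin (m+1)) := hadj
              rw [← Fin.castSucc_castPred (z1 : Fin (m+1)) (hzl z1),
                ← Fin.castSucc_castPred (z2 : Fin (m+1)) (hzl z2), hG'cast] at hadj'
              exact hadj'

end StackedAux

/-- A finite graph is chordal, planar and 3-connected if and only if, up to relabelling,
it is obtained from `K₄` by repeatedly adding a new vertex adjacent to the three vertices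
of a triangle bounding a face in a planar embedding (a stacked triangulation). -/
theorem chordal_planar_three_connected_iff_stacked (n : ℕ) (G : SimpleGraph (Fin n)) :
    (Chordal G ∧ Planar G ∧ ThreeConnected G) ↔
      ∃ G' : SimpleGraph (Fin n), IsStacked G' ∧ Nonempty (G ≃g G') := by
  constructor
  · rintro ⟨hc, hp, ht⟩
    exact StackedAux.forward n G hc hp ht
  · rintro ⟨G', hG', ⟨e⟩⟩
    exact StackedAux.stacked_props hG' e
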